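/- arXiv:2104.07631 — 8 statements merged into one kernel-verified Lean document; each statement's English description precedes it below -/
import Mathlib

section
/- There is no finite connected simple graph G = (V,E) with the edge set T ⊆ E of a spanning tree of G such that E∖T consists of exactly four distinct edges s₁, s₂, s₃, s₄ and there are four distinct tree edges f₁, f₂, f₃, f₄ ∈ T with: the set of non-tree edges covering f₁ equals {s₁, s₂, s₃}, the set covering f₂ equals {s₁, s₄}, the set covering f₃ equals {s₂, s₄}, and the set covering f₄ equals {s₃, s₄}. Consequently, the Min Sum Set Cover instance given by the hypergraph on vertex set {1,2,3,4} with hyperedges {1,2,3}, {1,4}, {2,4}, {3,4} does not arise from any Minimum Reconnection Time instance. -/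
open SimpleGraph

namespace MRTProof

variable {V : Type}

/-! ### Elementary propositional combinators -/

private lemma two_diff {A B C : Prop} (h1 : ¬(A ↔ B)) (h2 : ¬(A ↔ C)) : B ↔ C := by tauto

private lemma final {P23 P32 P24 P42 P34 P43 B2 B3 B4 : Prop}
    (d23 : P23 ↔ ¬P32) (d24 : P24 ↔ ¬P42) (d34 : P34 ↔ ¬P43)
    (t1_23 : P23 → B2 → ¬B3) (t2_23 : ¬P23 → ¬B2 → B3)
    (t1_32 : P32 → B3 → ¬B2) (t2_32 : ¬P32 → ¬B3 → B2)
    (t1_24 : P24 → B2 → ¬B4) (_t2_24 : ¬P24 → ¬B2 → B4)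
    (t1_42 : P42 → B4 → ¬B2) (t2_42 : ¬P42 → ¬B4 → B2)
    (t1_34 : P34 → B3 → ¬B4) (t2_34 : ¬P34 → ¬B3 → B4)
    (t1_43 : P43 → B4 → ¬B3) (t2_43 : ¬P43 → ¬B4 → B3) : False := by
  by_cases hB2 : B2
  · have hB3 : ¬B3 := by
      by_cases h : P23
      · exact t1_23 h hB2
      · intro h3; exact t1_32 (not_not.mp (fun hn => h (d23.mpr hn))) h3 hB2
    have hB4 : ¬B4 := by
      by_cases h : P24
      · exact t1_24 h hB2
      · intro h4; exact t1_42 (not_not.mp (fun hn => h (d24.mpr hn))) h4 hB2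
    by_cases h : P34
    · exact hB3 (t2_43 (d34.mp h) hB4)
    · exact hB4 (t2_34 h hB3)
  · have hB3 : B3 := by
      by_cases h : P23
      · by_contra h3; exact hB2 (t2_32 (d23.mp h) h3)
      · exact t2_23 h hB2
    have hB4 : B4 := by
      by_cases h : P24
      · by_contra h4; exact hB2 (t2_42 (d24.mp h) h4)
      · exact _t2_24 h hB2
    by_cases h : P34
    · exact t1_34 h hB3 hB4
    · exact t1_43 (not_not.mp (fun hn => h (d34.mpr hn))) hB4 hB3

/-! ### Graph lemmas about deleting a tree edge -/

private lemma graph_sdiff_eq (T : Set (Sym2 V)) (f : Sym2 V) :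
    fromEdgeSet T \ fromEdgeSet {f} = fromEdgeSet (T \ {f}) := by
  ext a b
  simp only [sdiff_adj, fromEdgeSet_adj, Set.mem_singleton_iff, Set.mem_diff]
  tauto

private lemma sep {T : Set (Sym2 V)} (hT : (fromEdgeSet T).IsTree)
    {u v : V} (huv : u ≠ v) (hf : s(u, v) ∈ T) :
    ¬ (fromEdgeSet (T \ {s(u, v)})).Reachable u v := by
  have he : s(u, v) ∈ (fromEdgeSet T).edgeSet := by
    rw [edgeSet_fromEdgeSet]
    exact ⟨hf, by simp [huv]⟩
  have hb := isAcyclic_iff_forall_edge_isBridge.mp hT.IsAcyclic he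
  rw [isBridge_iff] at hb
  rw [← graph_sdiff_eq]
  exact hb

private lemma walk_or {T : Set (Sym2 V)} {u v : V} {x y : V}
    (p : (fromEdgeSet T).Walk x y) :
    (fromEdgeSet (T \ {s(u, v)})).Reachable x y ∨
      ((fromEdgeSet (T \ {s(u, v)})).Reachable x u ∧
        (fromEdgeSet (T \ {s(u, v)})).Reachable y v) ∨
      ((fromEdgeSet (T \ {s(u, v)})).Reachable x v ∧
        (fromEdgeSet (T \ {s(u, v)})).Reachable y u) := by
  induction p with
  | nil => exact Or.inl (Reachable.refl _)
  | @cons x' w y' h p ih =>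
    by_cases he : s(x', w) = s(u, v)
    · rw [Sym2.eq_iff] at he
      rcases he with ⟨rfl, rfl⟩ | ⟨rfl, rfl⟩
      · rcases ih with h1 | ⟨h1, h2⟩ | ⟨h1, h2⟩
        · exact Or.inr (Or.inl ⟨Reachable.refl _, h1.symm⟩)
        · exact Or.inr (Or.inl ⟨Reachable.refl _, h2⟩)
        · exact Or.inl h2.symm
      · rcases ih with h1 | ⟨h1, h2⟩ | ⟨h1, h2⟩
        · exact Or.inr (Or.inr ⟨Reachable.refl _, h1.symm⟩)
        · exact Or.inl h2.symm
        · exact Or.inr (Or.inr ⟨Reachable.refl _, h2⟩)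
    · have hadj : (fromEdgeSet (T \ {s(u, v)})).Adj x' w := by
        rw [fromEdgeSet_adj]
        have h' := (fromEdgeSet_adj T).mp h
        exact ⟨⟨h'.1, he⟩, h'.2⟩
      rcases ih with h1 | ⟨h1, h2⟩ | ⟨h1, h2⟩
      · exact Or.inl (hadj.reachable.trans h1)
      · exact Or.inr (Or.inl ⟨hadj.reachable.trans h1, h2⟩)
      · exact Or.inr (Or.inr ⟨hadj.reachable.trans h1, h2⟩)

private lemma reach_or {T : Set (Sym2 V)} (hT : (fromEdgeSet T).IsTree)
    (u v : V) (x : V) :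
    (fromEdgeSet (T \ {s(u, v)})).Reachable x u ∨
      (fromEdgeSet (T \ {s(u, v)})).Reachable x v := by
  obtain ⟨p⟩ := hT.isConnected.preconnected x u
  rcases walk_or (u := u) (v := v) p with h | ⟨h1, _⟩ | ⟨h1, _⟩
  · exact Or.inl h
  · exact Or.inl h1
  · exact Or.inr h1

private lemma reach_iff {T : Set (Sym2 V)} (hT : (fromEdgeSet T).IsTree)
    {u v : V} (huv : u ≠ v) (hf : s(u, v) ∈ T) (a b : V) :
    (fromEdgeSet (T \ {s(u, v)})).Reachable a b ↔
      ((fromEdgeSet (T \ {s(u, v)})).Reachable a u ↔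
        (fromEdgeSet (T \ {s(u, v)})).Reachable b u) := by
  have hsep := sep hT huv hf
  constructor
  · intro h
    exact ⟨fun ha => h.symm.trans ha, fun hb => h.trans hb⟩
  · intro h
    rcases reach_or hT u v a with ha | ha
    · exact ha.trans (h.mp ha).symm
    · rcases reach_or hT u v b with hb | hb
      · exact absurd ((h.mpr hb).symm.trans ha) hsep
      · exact ha.trans hb.symm

private lemma cover_iff {T : Set (Sym2 V)} (hT : (fromEdgeSet T).IsTree)
    {u v a b : V} (huv : u ≠ v) (hab : a ≠ b) (hf : s(u, v) ∈ T) :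
    (fromEdgeSet ((T \ {s(u, v)}) ∪ {s(a, b)})).Connected ↔
      ¬ (fromEdgeSet (T \ {s(u, v)})).Reachable a b := by
  constructor
  · intro hconn hr
    have key : ∀ {x y : V}, (fromEdgeSet ((T \ {s(u, v)}) ∪ {s(a, b)})).Walk x y →
        (fromEdgeSet (T \ {s(u, v)})).Reachable x y := by
      intro x y p
      induction p with
      | nil => exact Reachable.refl _
      | @cons x' w y' h p ih =>
        have h' := (fromEdgeSet_adj _).mp h
        rcases h'.1 with hm | hm
        · exact (((fromEdgeSet_adj _).mpr ⟨hm, h'.2⟩).reachable).trans ih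
        · rw [Set.mem_singleton_iff, Sym2.eq_iff] at hm
          rcases hm with ⟨rfl, rfl⟩ | ⟨rfl, rfl⟩
          · exact hr.trans ih
          · exact hr.symm.trans ih
    obtain ⟨p⟩ := hconn.preconnected u v
    exact sep hT huv hf (key p)
  · intro hnr
    have mono : fromEdgeSet (T \ {s(u, v)}) ≤ fromEdgeSet ((T \ {s(u, v)}) ∪ {s(a, b)}) :=
      fromEdgeSet_mono Set.subset_union_left
    have hadj : (fromEdgeSet ((T \ {s(u, v)}) ∪ {s(a, b)})).Adj a b :=
      (fromEdgeSet_adj _).mpr ⟨Or.inr rfl, hab⟩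
    have huvH : (fromEdgeSet ((T \ {s(u, v)}) ∪ {s(a, b)})).Reachable u v := by
      rcases reach_or hT u v a with ha | ha <;> rcases reach_or hT u v b with hb | hb
      · exact absurd (ha.trans hb.symm) hnr
      · exact ((ha.symm.mono mono).trans hadj.reachable).trans (hb.mono mono)
      · exact ((hb.symm.mono mono).trans hadj.symm.reachable).trans (ha.mono mono)
      · exact absurd (ha.trans hb.symm) hnr
    haveI : Nonempty V := ⟨u⟩
    refine ⟨fun x y => ?_⟩
    rcases reach_or hT u v x with hx | hx <;> rcases reach_or hT u v y with hy | hy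
    · exact (hx.mono mono).trans (hy.mono mono).symm
    · exact ((hx.mono mono).trans huvH).trans (hy.mono mono).symm
    · exact ((hx.mono mono).trans huvH.symm).trans (hy.mono mono).symm
    · exact (hx.mono mono).trans (hy.mono mono).symm

/-- Helly-type lemma: two vertices strictly separated from `u'` by the cut of the tree
edge `s(u,v)` are connected after deleting any other tree edge `s(u',v')`. -/
private lemma L4 {T : Set (Sym2 V)} (hT : (fromEdgeSet T).IsTree)
    {u v u' v' : V} {w w' : V}
    (hw : ¬ (fromEdgeSet (T \ {s(u, v)})).Reachable w u')
    (hw' : ¬ (fromEdgeSet (T \ {s(u, v)})).Reachable w' u') :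
    (fromEdgeSet (T \ {s(u', v')})).Reachable w w' := by
  classical
  obtain ⟨q⟩ := hT.isConnected.preconnected w w'
  obtain ⟨p, hp⟩ : ∃ p : (fromEdgeSet T).Walk w w', p.IsPath := ⟨q.toPath.1, q.toPath.2⟩
  by_cases hmem : s(u', v') ∈ p.edges
  · exfalso
    have hu'sup : u' ∈ p.support := p.fst_mem_support_of_mem_edges hmem
    have hsplit := p.take_spec hu'sup
    have hnodup : (p.edges).Nodup := hp.edges_nodup
    have hnodup2 : ((p.takeUntil u' hu'sup).edges ++ (p.dropUntil u' hu'sup).edges).Nodup := by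
      rw [← Walk.edges_append, hsplit]; exact hnodup
    have hdis := List.disjoint_of_nodup_append hnodup2
    have h1 : s(u, v) ∈ (p.takeUntil u' hu'sup).edges := by
      by_contra hno
      refine hw ⟨(p.takeUntil u' hu'sup).transfer _ ?_⟩
      intro e he
      have heT := (p.takeUntil u' hu'sup).edges_subset_edgeSet he
      rw [edgeSet_fromEdgeSet] at heT ⊢
      exact ⟨⟨heT.1, fun hh => hno (by rwa [hh] at he)⟩, heT.2⟩
    have h2 : s(u, v) ∈ (p.dropUntil u' hu'sup).edges := by
      by_contra hno
      refine hw' (Reachable.symm ⟨(p.dropUntil u' hu'sup).transfer _ ?_⟩)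
      intro e he
      have heT := (p.dropUntil u' hu'sup).edges_subset_edgeSet he
      rw [edgeSet_fromEdgeSet] at heT ⊢
      exact ⟨⟨heT.1, fun hh => hno (by rwa [hh] at he)⟩, heT.2⟩
    exact hdis h1 h2
  · refine ⟨p.transfer _ ?_⟩
    intro e he
    have heT := p.edges_subset_edgeSet he
    rw [edgeSet_fromEdgeSet] at heT ⊢
    exact ⟨⟨heT.1, fun hh => hmem (by rwa [hh] at he)⟩, heT.2⟩

/-! ### The abstract side-function argument -/

private lemma stepA (σ σ₁ : V → Prop) (u₁ a b a₄ b₄ : V)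
    (hx : ¬(σ a ↔ σ b)) (hx4 : ¬(σ a₄ ↔ σ b₄))
    (h1 : ¬(σ₁ a ↔ σ₁ b)) (h14 : σ₁ a₄ ↔ σ₁ b₄)
    (L : ∀ w w', ¬(σ w ↔ σ u₁) → ¬(σ w' ↔ σ u₁) → (σ₁ w ↔ σ₁ w')) :
    ∃ x y, ((x = a ∧ y = b) ∨ (x = b ∧ y = a)) ∧ ¬(σ x ↔ σ u₁) ∧ ¬(σ x ↔ σ y) ∧
      (σ₁ x ↔ σ₁ a₄) ∧ ¬(σ₁ y ↔ σ₁ a₄) := by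
  by_cases h : σ a ↔ σ u₁
  · have hbx : ¬(σ b ↔ σ u₁) := fun hh => hx (h.trans hh.symm)
    have hb4 : σ₁ b ↔ σ₁ a₄ := by
      by_cases h4 : σ a₄ ↔ σ u₁
      · exact (L b b₄ hbx (fun hh => hx4 (h4.trans hh.symm))).trans h14.symm
      · exact L b a₄ hbx h4
    exact ⟨b, a, Or.inr ⟨rfl, rfl⟩, hbx, fun hh => hx hh.symm, hb4,
      fun hh => h1 (hh.trans hb4.symm)⟩
  · have ha4 : σ₁ a ↔ σ₁ a₄ := by
      by_cases h4 : σ a₄ ↔ σ u₁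
      · exact (L a b₄ h (fun hh => hx4 (h4.trans hh.symm))).trans h14.symm
      · exact L a a₄ h h4
    exact ⟨a, b, Or.inl ⟨rfl, rfl⟩, h, hx, ha4, fun hh => h1 (ha4.trans hh.symm)⟩

private lemma stepD (σi σj : V → Prop) (ui vi uj a₄ b₄ : V)
    (ei : σi ui) (ei' : ¬ σi vi)
    (nji : σj ui ↔ σj vi)
    (xi4 : ¬(σi a₄ ↔ σi b₄)) (xj4 : ¬(σj a₄ ↔ σj b₄))
    (Lij : ∀ w w', ¬(σi w ↔ σi uj) → ¬(σi w' ↔ σi uj) → (σj w ↔ σj w')) :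
    (σi a₄ ↔ σi uj) ↔ ¬(σj a₄ ↔ σj ui) := by
  obtain ⟨z, hz1, hz2⟩ : ∃ z, ¬(σi z ↔ σi uj) ∧ (σj z ↔ σj ui) := by
    by_cases hz : σi ui ↔ σi uj
    · exact ⟨vi, fun hh => ei' (hh.mpr (hz.mp ei)), nji.symm⟩
    · exact ⟨ui, hz, Iff.rfl⟩
  constructor
  · intro h
    have hb : ¬(σi b₄ ↔ σi uj) := fun hh => xi4 (h.trans hh.symm)
    have hkey : σj b₄ ↔ σj ui := (Lij b₄ z hb hz1).trans hz2
    exact fun hh => xj4 (hh.trans hkey.symm)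
  · intro h
    by_contra h'
    exact h ((Lij a₄ z h' hz1).trans hz2)

private lemma stepT (σi σj : V → Prop) (uj u₁ a₄ b₄ xi : V)
    (far : ¬(σi xi ↔ σi u₁))
    (Cij : σj xi ↔ σj u₁)
    (xi4 : ¬(σi a₄ ↔ σi b₄)) (xj4 : ¬(σj a₄ ↔ σj b₄))
    (Lij : ∀ w w', ¬(σi w ↔ σi uj) → ¬(σi w' ↔ σi uj) → (σj w ↔ σj w')) :
    ((σi a₄ ↔ σi uj) → (σi a₄ ↔ σi u₁) → ¬(σj a₄ ↔ σj u₁)) ∧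
    (¬(σi a₄ ↔ σi uj) → ¬(σi a₄ ↔ σi u₁) → (σj a₄ ↔ σj u₁)) := by
  constructor
  · intro h1 h2
    have hxf : ¬(σi xi ↔ σi uj) := fun hh => far (hh.trans (h1.symm.trans h2))
    have hb4 : ¬(σi b₄ ↔ σi uj) := fun hh => xi4 (h1.trans hh.symm)
    have hkey : σj b₄ ↔ σj u₁ := (Lij xi b₄ hxf hb4).symm.trans Cij
    exact fun hh => xj4 (hh.trans hkey.symm)
  · intro h1 h2
    have huju₁ : σi uj ↔ σi u₁ := two_diff h1 h2
    have hxf : ¬(σi xi ↔ σi uj) := fun hh => far (hh.trans huju₁)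
    exact (Lij xi a₄ hxf h1).symm.trans Cij

private lemma core (σ₁ σ₂ σ₃ σ₄ : V → Prop)
    (u₁ u₂ v₂ u₃ v₃ u₄ v₄ a₁ b₁ a₂ b₂ a₃ b₃ a₄ b₄ : V)
    (e₂ : σ₂ u₂) (e₂' : ¬ σ₂ v₂) (e₃ : σ₃ u₃) (e₃' : ¬ σ₃ v₃) (e₄ : σ₄ u₄) (e₄' : ¬ σ₄ v₄)
    (n₃₂ : σ₃ u₂ ↔ σ₃ v₂) (n₄₂ : σ₄ u₂ ↔ σ₄ v₂)
    (n₂₃ : σ₂ u₃ ↔ σ₂ v₃) (n₄₃ : σ₄ u₃ ↔ σ₄ v₃)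
    (n₂₄ : σ₂ u₄ ↔ σ₂ v₄) (n₃₄ : σ₃ u₄ ↔ σ₃ v₄)
    (x₁₁ : ¬(σ₁ a₁ ↔ σ₁ b₁)) (x₁₂ : ¬(σ₁ a₂ ↔ σ₁ b₂))
    (x₁₃ : ¬(σ₁ a₃ ↔ σ₁ b₃)) (x₁₄ : σ₁ a₄ ↔ σ₁ b₄)
    (x₂₁ : ¬(σ₂ a₁ ↔ σ₂ b₁)) (x₂₂ : σ₂ a₂ ↔ σ₂ b₂)
    (x₂₃ : σ₂ a₃ ↔ σ₂ b₃) (x₂₄ : ¬(σ₂ a₄ ↔ σ₂ b₄))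
    (x₃₁ : σ₃ a₁ ↔ σ₃ b₁) (x₃₂ : ¬(σ₃ a₂ ↔ σ₃ b₂))
    (x₃₃ : σ₃ a₃ ↔ σ₃ b₃) (x₃₄ : ¬(σ₃ a₄ ↔ σ₃ b₄))
    (x₄₁ : σ₄ a₁ ↔ σ₄ b₁) (x₄₂ : σ₄ a₂ ↔ σ₄ b₂)
    (x₄₃ : ¬(σ₄ a₃ ↔ σ₄ b₃)) (x₄₄ : ¬(σ₄ a₄ ↔ σ₄ b₄))
    (L₂₁ : ∀ w w', ¬(σ₂ w ↔ σ₂ u₁) → ¬(σ₂ w' ↔ σ₂ u₁) → (σ₁ w ↔ σ₁ w'))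
    (L₃₁ : ∀ w w', ¬(σ₃ w ↔ σ₃ u₁) → ¬(σ₃ w' ↔ σ₃ u₁) → (σ₁ w ↔ σ₁ w'))
    (L₄₁ : ∀ w w', ¬(σ₄ w ↔ σ₄ u₁) → ¬(σ₄ w' ↔ σ₄ u₁) → (σ₁ w ↔ σ₁ w'))
    (L₁₂ : ∀ w w', ¬(σ₁ w ↔ σ₁ u₂) → ¬(σ₁ w' ↔ σ₁ u₂) → (σ₂ w ↔ σ₂ w'))
    (L₁₃ : ∀ w w', ¬(σ₁ w ↔ σ₁ u₃) → ¬(σ₁ w' ↔ σ₁ u₃) → (σ₃ w ↔ σ₃ w'))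
    (L₁₄ : ∀ w w', ¬(σ₁ w ↔ σ₁ u₄) → ¬(σ₁ w' ↔ σ₁ u₄) → (σ₄ w ↔ σ₄ w'))
    (L₂₃ : ∀ w w', ¬(σ₂ w ↔ σ₂ u₃) → ¬(σ₂ w' ↔ σ₂ u₃) → (σ₃ w ↔ σ₃ w'))
    (L₃₂ : ∀ w w', ¬(σ₃ w ↔ σ₃ u₂) → ¬(σ₃ w' ↔ σ₃ u₂) → (σ₂ w ↔ σ₂ w'))
    (L₂₄ : ∀ w w', ¬(σ₂ w ↔ σ₂ u₄) → ¬(σ₂ w' ↔ σ₂ u₄) → (σ₄ w ↔ σ₄ w'))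
    (L₄₂ : ∀ w w', ¬(σ₄ w ↔ σ₄ u₂) → ¬(σ₄ w' ↔ σ₄ u₂) → (σ₂ w ↔ σ₂ w'))
    (L₃₄ : ∀ w w', ¬(σ₃ w ↔ σ₃ u₄) → ¬(σ₃ w' ↔ σ₃ u₄) → (σ₄ w ↔ σ₄ w'))
    (L₄₃ : ∀ w w', ¬(σ₄ w ↔ σ₄ u₃) → ¬(σ₄ w' ↔ σ₄ u₃) → (σ₃ w ↔ σ₃ w')) :
    False := by
  -- Step A: for each cut i ∈ {2,3,4} pick the endpoint of its partner edge on the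
  -- far side (from f₁) of cut i; it is on the s₄-side of cut 1.
  obtain ⟨x₂, y₂, hxy₂, A₂far, A₂cross, A₂τ, A₂yτ⟩ :=
    stepA σ₂ σ₁ u₁ a₁ b₁ a₄ b₄ x₂₁ x₂₄ x₁₁ x₁₄ L₂₁
  obtain ⟨x₃, y₃, hxy₃, A₃far, A₃cross, A₃τ, A₃yτ⟩ :=
    stepA σ₃ σ₁ u₁ a₂ b₂ a₄ b₄ x₃₂ x₃₄ x₁₂ x₁₄ L₃₁
  obtain ⟨x₄, y₄, hxy₄, A₄far, A₄cross, A₄τ, A₄yτ⟩ :=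
    stepA σ₄ σ₁ u₁ a₃ b₃ a₄ b₄ x₄₃ x₄₄ x₁₃ x₁₄ L₄₁
  -- partner edges do not cross the other two cuts
  have p32 : σ₃ x₂ ↔ σ₃ y₂ := by
    rcases hxy₂ with ⟨rfl, rfl⟩ | ⟨rfl, rfl⟩; exacts [x₃₁, x₃₁.symm]
  have p42 : σ₄ x₂ ↔ σ₄ y₂ := by
    rcases hxy₂ with ⟨rfl, rfl⟩ | ⟨rfl, rfl⟩; exacts [x₄₁, x₄₁.symm]
  have p23 : σ₂ x₃ ↔ σ₂ y₃ := by
    rcases hxy₃ with ⟨rfl, rfl⟩ | ⟨rfl, rfl⟩; exacts [x₂₂, x₂₂.symm]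
  have p43 : σ₄ x₃ ↔ σ₄ y₃ := by
    rcases hxy₃ with ⟨rfl, rfl⟩ | ⟨rfl, rfl⟩; exacts [x₄₂, x₄₂.symm]
  have p24 : σ₂ x₄ ↔ σ₂ y₄ := by
    rcases hxy₄ with ⟨rfl, rfl⟩ | ⟨rfl, rfl⟩; exacts [x₂₃, x₂₃.symm]
  have p34 : σ₃ x₄ ↔ σ₃ y₄ := by
    rcases hxy₄ with ⟨rfl, rfl⟩ | ⟨rfl, rfl⟩; exacts [x₃₃, x₃₃.symm]
  -- Step B: each f_j (j ∈ {2,3,4}) is on the s₄-side of cut 1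
  have N₂ : σ₁ u₂ ↔ σ₁ a₄ := by
    by_contra h
    exact x₂₄ (L₁₂ a₄ b₄ (fun hh => h hh.symm) (fun hh => h (x₁₄.trans hh).symm))
  have N₃ : σ₁ u₃ ↔ σ₁ a₄ := by
    by_contra h
    exact x₃₄ (L₁₃ a₄ b₄ (fun hh => h hh.symm) (fun hh => h (x₁₄.trans hh).symm))
  have N₄ : σ₁ u₄ ↔ σ₁ a₄ := by
    by_contra h
    exact x₄₄ (L₁₄ a₄ b₄ (fun hh => h hh.symm) (fun hh => h (x₁₄.trans hh).symm))
  -- Step C: σ_j x_i ↔ σ_j u₁ for i ≠ j in {2,3,4}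
  have hy₂u₁ : σ₂ y₂ ↔ σ₂ u₁ := two_diff A₂cross A₂far
  have hy₃u₁ : σ₃ y₃ ↔ σ₃ u₁ := two_diff A₃cross A₃far
  have hy₄u₁ : σ₄ y₄ ↔ σ₄ u₁ := two_diff A₄cross A₄far
  have C₃₂ : σ₂ x₃ ↔ σ₂ u₁ :=
    p23.trans ((L₁₂ y₃ y₂ (fun hh => A₃yτ (hh.trans N₂)) (fun hh => A₂yτ (hh.trans N₂))).trans hy₂u₁)
  have C₄₂ : σ₂ x₄ ↔ σ₂ u₁ :=
    p24.trans ((L₁₂ y₄ y₂ (fun hh => A₄yτ (hh.trans N₂)) (fun hh => A₂yτ (hh.trans N₂))).trans hy₂u₁)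
  have C₂₃ : σ₃ x₂ ↔ σ₃ u₁ :=
    p32.trans ((L₁₃ y₂ y₃ (fun hh => A₂yτ (hh.trans N₃)) (fun hh => A₃yτ (hh.trans N₃))).trans hy₃u₁)
  have C₄₃ : σ₃ x₄ ↔ σ₃ u₁ :=
    p34.trans ((L₁₃ y₄ y₃ (fun hh => A₄yτ (hh.trans N₃)) (fun hh => A₃yτ (hh.trans N₃))).trans hy₃u₁)
  have C₂₄ : σ₄ x₂ ↔ σ₄ u₁ :=
    p42.trans ((L₁₄ y₂ y₄ (fun hh => A₂yτ (hh.trans N₄)) (fun hh => A₄yτ (hh.trans N₄))).trans hy₄u₁)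
  have C₃₄ : σ₄ x₃ ↔ σ₄ u₁ :=
    p43.trans ((L₁₄ y₃ y₄ (fun hh => A₃yτ (hh.trans N₄)) (fun hh => A₄yτ (hh.trans N₄))).trans hy₄u₁)
  -- Step D: tournament relation on the three cuts
  have D₂₃ := stepD σ₂ σ₃ u₂ v₂ u₃ a₄ b₄ e₂ e₂' n₃₂ x₂₄ x₃₄ L₂₃
  have D₂₄ := stepD σ₂ σ₄ u₂ v₂ u₄ a₄ b₄ e₂ e₂' n₄₂ x₂₄ x₄₄ L₂₄
  have D₃₄ := stepD σ₃ σ₄ u₃ v₃ u₄ a₄ b₄ e₃ e₃' n₄₃ x₃₄ x₄₄ L₃₄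
  -- Step E: T1/T2 implications for each ordered pair
  have T₂₃ := stepT σ₂ σ₃ u₃ u₁ a₄ b₄ x₂ A₂far C₂₃ x₂₄ x₃₄ L₂₃
  have T₃₂ := stepT σ₃ σ₂ u₂ u₁ a₄ b₄ x₃ A₃far C₃₂ x₃₄ x₂₄ L₃₂
  have T₂₄ := stepT σ₂ σ₄ u₄ u₁ a₄ b₄ x₂ A₂far C₂₄ x₂₄ x₄₄ L₂₄
  have T₄₂ := stepT σ₄ σ₂ u₂ u₁ a₄ b₄ x₄ A₄far C₄₂ x₄₄ x₂₄ L₄₂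
  have T₃₄ := stepT σ₃ σ₄ u₄ u₁ a₄ b₄ x₃ A₃far C₃₄ x₃₄ x₄₄ L₃₄
  have T₄₃ := stepT σ₄ σ₃ u₃ u₁ a₄ b₄ x₄ A₄far C₄₃ x₄₄ x₃₄ L₄₃
  exact final D₂₃ D₂₄ D₃₄
    T₂₃.1 T₂₃.2 T₃₂.1 T₃₂.2 T₂₄.1 T₂₄.2 T₄₂.1 T₄₂.2 T₃₄.1 T₃₄.2 T₄₃.1 T₄₃.2

end MRTProof

open SimpleGraph MRTProof in
/-- There is no finite connected simple graph `G` with spanning tree edge set `T`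
whose non-tree edges are exactly four distinct edges `s₁, s₂, s₃, s₄` and which has
four distinct tree edges `f₁, f₂, f₃, f₄` whose sets of covering non-tree edges are
`{s₁,s₂,s₃}`, `{s₁,s₄}`, `{s₂,s₄}`, `{s₃,s₄}` respectively.  (A non-tree edge `s`
covers a tree edge `e` iff `(T∖{e}) ∪ {s}` spans a connected graph.) -/
theorem stmt_1 :
    ¬ ∃ (V : Type) (G : SimpleGraph V) (T : Set (Sym2 V))
        (s₁ s₂ s₃ s₄ f₁ f₂ f₃ f₄ : Sym2 V),
      Finite V ∧ G.Connected ∧ T ⊆ G.edgeSet ∧ (SimpleGraph.fromEdgeSet T).IsTree ∧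
      G.edgeSet \ T = {s₁, s₂, s₃, s₄} ∧
      s₁ ≠ s₂ ∧ s₁ ≠ s₃ ∧ s₁ ≠ s₄ ∧ s₂ ≠ s₃ ∧ s₂ ≠ s₄ ∧ s₃ ≠ s₄ ∧
      f₁ ∈ T ∧ f₂ ∈ T ∧ f₃ ∈ T ∧ f₄ ∈ T ∧
      f₁ ≠ f₂ ∧ f₁ ≠ f₃ ∧ f₁ ≠ f₄ ∧ f₂ ≠ f₃ ∧ f₂ ≠ f₄ ∧ f₃ ≠ f₄ ∧
      {s ∈ G.edgeSet \ T | (SimpleGraph.fromEdgeSet ((T \ {f₁}) ∪ {s})).Connected}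
        = {s₁, s₂, s₃} ∧
      {s ∈ G.edgeSet \ T | (SimpleGraph.fromEdgeSet ((T \ {f₂}) ∪ {s})).Connected}
        = {s₁, s₄} ∧
      {s ∈ G.edgeSet \ T | (SimpleGraph.fromEdgeSet ((T \ {f₃}) ∪ {s})).Connected}
        = {s₂, s₄} ∧
      {s ∈ G.edgeSet \ T | (SimpleGraph.fromEdgeSet ((T \ {f₄}) ∪ {s})).Connected}
        = {s₃, s₄} := by
  rintro ⟨V, G, T, s₁, s₂, s₃, s₄, f₁, f₂, f₃, f₄, _hFin, _hGconn, hTsub, hT,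
    hdiff, h12, h13, h14, h23, h24, h34, hf1T, hf2T, hf3T, hf4T,
    g12, g13, g14, g23, g24, g34, hcov₁, hcov₂, hcov₃, hcov₄⟩
  obtain ⟨u₁, v₁, rfl⟩ : ∃ x y, f₁ = s(x, y) :=
    Sym2.ind (f := fun z => ∃ x y, z = s(x, y)) (fun x y => ⟨x, y, rfl⟩) f₁
  obtain ⟨u₂, v₂, rfl⟩ : ∃ x y, f₂ = s(x, y) :=
    Sym2.ind (f := fun z => ∃ x y, z = s(x, y)) (fun x y => ⟨x, y, rfl⟩) f₂
  obtain ⟨u₃, v₃, rfl⟩ : ∃ x y, f₃ = s(x, y) :=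
    Sym2.ind (f := fun z => ∃ x y, z = s(x, y)) (fun x y => ⟨x, y, rfl⟩) f₃
  obtain ⟨u₄, v₄, rfl⟩ : ∃ x y, f₄ = s(x, y) :=
    Sym2.ind (f := fun z => ∃ x y, z = s(x, y)) (fun x y => ⟨x, y, rfl⟩) f₄
  obtain ⟨a₁, b₁, rfl⟩ : ∃ x y, s₁ = s(x, y) :=
    Sym2.ind (f := fun z => ∃ x y, z = s(x, y)) (fun x y => ⟨x, y, rfl⟩) s₁
  obtain ⟨a₂, b₂, rfl⟩ : ∃ x y, s₂ = s(x, y) :=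
    Sym2.ind (f := fun z => ∃ x y, z = s(x, y)) (fun x y => ⟨x, y, rfl⟩) s₂
  obtain ⟨a₃, b₃, rfl⟩ : ∃ x y, s₃ = s(x, y) :=
    Sym2.ind (f := fun z => ∃ x y, z = s(x, y)) (fun x y => ⟨x, y, rfl⟩) s₃
  obtain ⟨a₄, b₄, rfl⟩ : ∃ x y, s₄ = s(x, y) :=
    Sym2.ind (f := fun z => ∃ x y, z = s(x, y)) (fun x y => ⟨x, y, rfl⟩) s₄
  have hu1 : u₁ ≠ v₁ := (G.mem_edgeSet.mp (hTsub hf1T)).ne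
  have hu2 : u₂ ≠ v₂ := (G.mem_edgeSet.mp (hTsub hf2T)).ne
  have hu3 : u₃ ≠ v₃ := (G.mem_edgeSet.mp (hTsub hf3T)).ne
  have hu4 : u₄ ≠ v₄ := (G.mem_edgeSet.mp (hTsub hf4T)).ne
  have hs1mem : s(a₁, b₁) ∈ G.edgeSet \ T := by rw [hdiff]; simp
  have hab1 : a₁ ≠ b₁ := (G.mem_edgeSet.mp hs1mem.1).ne
  have hs2mem : s(a₂, b₂) ∈ G.edgeSet \ T := by rw [hdiff]; simp
  have hab2 : a₂ ≠ b₂ := (G.mem_edgeSet.mp hs2mem.1).ne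
  have hs3mem : s(a₃, b₃) ∈ G.edgeSet \ T := by rw [hdiff]; simp
  have hab3 : a₃ ≠ b₃ := (G.mem_edgeSet.mp hs3mem.1).ne
  have hs4mem : s(a₄, b₄) ∈ G.edgeSet \ T := by rw [hdiff]; simp
  have hab4 : a₄ ≠ b₄ := (G.mem_edgeSet.mp hs4mem.1).ne
  have cross : ∀ {u v a b : V}, s(u, v) ∈ T → u ≠ v → a ≠ b →
      (SimpleGraph.fromEdgeSet ((T \ {s(u, v)}) ∪ {s(a, b)})).Connected →
      ¬ ((SimpleGraph.fromEdgeSet (T \ {s(u, v)})).Reachable a u ↔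
          (SimpleGraph.fromEdgeSet (T \ {s(u, v)})).Reachable b u) := by
    intro u v a b hf huv hab hc hiff
    exact (cover_iff hT huv hab hf).mp hc ((reach_iff hT huv hf a b).mpr hiff)
  have same : ∀ {u v a b : V}, s(u, v) ∈ T → u ≠ v → a ≠ b →
      ¬ (SimpleGraph.fromEdgeSet ((T \ {s(u, v)}) ∪ {s(a, b)})).Connected →
      ((SimpleGraph.fromEdgeSet (T \ {s(u, v)})).Reachable a u ↔
          (SimpleGraph.fromEdgeSet (T \ {s(u, v)})).Reachable b u) := by
    intro u v a b hf huv hab hnc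
    exact (reach_iff hT huv hf a b).mp
      (not_not.mp (fun hnr => hnc ((cover_iff hT huv hab hf).mpr hnr)))
  have c11 : (SimpleGraph.fromEdgeSet ((T \ {s(u₁, v₁)}) ∪ {s(a₁, b₁)})).Connected := by
    have hm : s(a₁, b₁) ∈ ({s(a₁, b₁), s(a₂, b₂), s(a₃, b₃)} : Set (Sym2 V)) := by simp
    rw [← hcov₁] at hm
    exact hm.2
  have c12 : (SimpleGraph.fromEdgeSet ((T \ {s(u₁, v₁)}) ∪ {s(a₂, b₂)})).Connected := by
    have hm : s(a₂, b₂) ∈ ({s(a₁, b₁), s(a₂, b₂), s(a₃, b₃)} : Set (Sym2 V)) := by simp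
    rw [← hcov₁] at hm
    exact hm.2
  have c13 : (SimpleGraph.fromEdgeSet ((T \ {s(u₁, v₁)}) ∪ {s(a₃, b₃)})).Connected := by
    have hm : s(a₃, b₃) ∈ ({s(a₁, b₁), s(a₂, b₂), s(a₃, b₃)} : Set (Sym2 V)) := by simp
    rw [← hcov₁] at hm
    exact hm.2
  have c14 : ¬ (SimpleGraph.fromEdgeSet ((T \ {s(u₁, v₁)}) ∪ {s(a₄, b₄)})).Connected := by
    intro hc
    have hm : s(a₄, b₄) ∈ ({s(a₁, b₁), s(a₂, b₂), s(a₃, b₃)} : Set (Sym2 V)) := by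
      rw [← hcov₁]; exact ⟨hs4mem, hc⟩
    simp only [Set.mem_insert_iff, Set.mem_singleton_iff] at hm
    rcases hm with hh | hh
    · exact h14 hh.symm
    · rcases hh with hh | hh
      · exact h24 hh.symm
      · exact h34 hh.symm
  have c21 : (SimpleGraph.fromEdgeSet ((T \ {s(u₂, v₂)}) ∪ {s(a₁, b₁)})).Connected := by
    have hm : s(a₁, b₁) ∈ ({s(a₁, b₁), s(a₄, b₄)} : Set (Sym2 V)) := by simp
    rw [← hcov₂] at hm
    exact hm.2
  have c22 : ¬ (SimpleGraph.fromEdgeSet ((T \ {s(u₂, v₂)}) ∪ {s(a₂, b₂)})).Connected := by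
    intro hc
    have hm : s(a₂, b₂) ∈ ({s(a₁, b₁), s(a₄, b₄)} : Set (Sym2 V)) := by
      rw [← hcov₂]; exact ⟨hs2mem, hc⟩
    simp only [Set.mem_insert_iff, Set.mem_singleton_iff] at hm
    rcases hm with hh | hh
    · exact h12 hh.symm
    · exact h24 hh
  have c23 : ¬ (SimpleGraph.fromEdgeSet ((T \ {s(u₂, v₂)}) ∪ {s(a₃, b₃)})).Connected := by
    intro hc
    have hm : s(a₃, b₃) ∈ ({s(a₁, b₁), s(a₄, b₄)} : Set (Sym2 V)) := by
      rw [← hcov₂]; exact ⟨hs3mem, hc⟩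
    simp only [Set.mem_insert_iff, Set.mem_singleton_iff] at hm
    rcases hm with hh | hh
    · exact h13 hh.symm
    · exact h34 hh
  have c24 : (SimpleGraph.fromEdgeSet ((T \ {s(u₂, v₂)}) ∪ {s(a₄, b₄)})).Connected := by
    have hm : s(a₄, b₄) ∈ ({s(a₁, b₁), s(a₄, b₄)} : Set (Sym2 V)) := by simp
    rw [← hcov₂] at hm
    exact hm.2
  have c31 : ¬ (SimpleGraph.fromEdgeSet ((T \ {s(u₃, v₃)}) ∪ {s(a₁, b₁)})).Connected := by
    intro hc
    have hm : s(a₁, b₁) ∈ ({s(a₂, b₂), s(a₄, b₄)} : Set (Sym2 V)) := by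
      rw [← hcov₃]; exact ⟨hs1mem, hc⟩
    simp only [Set.mem_insert_iff, Set.mem_singleton_iff] at hm
    rcases hm with hh | hh
    · exact h12 hh
    · exact h14 hh
  have c32 : (SimpleGraph.fromEdgeSet ((T \ {s(u₃, v₃)}) ∪ {s(a₂, b₂)})).Connected := by
    have hm : s(a₂, b₂) ∈ ({s(a₂, b₂), s(a₄, b₄)} : Set (Sym2 V)) := by simp
    rw [← hcov₃] at hm
    exact hm.2
  have c33 : ¬ (SimpleGraph.fromEdgeSet ((T \ {s(u₃, v₃)}) ∪ {s(a₃, b₃)})).Connected := by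
    intro hc
    have hm : s(a₃, b₃) ∈ ({s(a₂, b₂), s(a₄, b₄)} : Set (Sym2 V)) := by
      rw [← hcov₃]; exact ⟨hs3mem, hc⟩
    simp only [Set.mem_insert_iff, Set.mem_singleton_iff] at hm
    rcases hm with hh | hh
    · exact h23 hh.symm
    · exact h34 hh
  have c34 : (SimpleGraph.fromEdgeSet ((T \ {s(u₃, v₃)}) ∪ {s(a₄, b₄)})).Connected := by
    have hm : s(a₄, b₄) ∈ ({s(a₂, b₂), s(a₄, b₄)} : Set (Sym2 V)) := by simp
    rw [← hcov₃] at hm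
    exact hm.2
  have c41 : ¬ (SimpleGraph.fromEdgeSet ((T \ {s(u₄, v₄)}) ∪ {s(a₁, b₁)})).Connected := by
    intro hc
    have hm : s(a₁, b₁) ∈ ({s(a₃, b₃), s(a₄, b₄)} : Set (Sym2 V)) := by
      rw [← hcov₄]; exact ⟨hs1mem, hc⟩
    simp only [Set.mem_insert_iff, Set.mem_singleton_iff] at hm
    rcases hm with hh | hh
    · exact h13 hh
    · exact h14 hh
  have c42 : ¬ (SimpleGraph.fromEdgeSet ((T \ {s(u₄, v₄)}) ∪ {s(a₂, b₂)})).Connected := by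
    intro hc
    have hm : s(a₂, b₂) ∈ ({s(a₃, b₃), s(a₄, b₄)} : Set (Sym2 V)) := by
      rw [← hcov₄]; exact ⟨hs2mem, hc⟩
    simp only [Set.mem_insert_iff, Set.mem_singleton_iff] at hm
    rcases hm with hh | hh
    · exact h23 hh
    · exact h24 hh
  have c43 : (SimpleGraph.fromEdgeSet ((T \ {s(u₄, v₄)}) ∪ {s(a₃, b₃)})).Connected := by
    have hm : s(a₃, b₃) ∈ ({s(a₃, b₃), s(a₄, b₄)} : Set (Sym2 V)) := by simp
    rw [← hcov₄] at hm
    exact hm.2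
  have c44 : (SimpleGraph.fromEdgeSet ((T \ {s(u₄, v₄)}) ∪ {s(a₄, b₄)})).Connected := by
    have hm : s(a₄, b₄) ∈ ({s(a₃, b₃), s(a₄, b₄)} : Set (Sym2 V)) := by simp
    rw [← hcov₄] at hm
    exact hm.2
  have X11 := cross hf1T hu1 hab1 c11
  have X12 := cross hf1T hu1 hab2 c12
  have X13 := cross hf1T hu1 hab3 c13
  have X14 := same hf1T hu1 hab4 c14
  have X21 := cross hf2T hu2 hab1 c21
  have X22 := same hf2T hu2 hab2 c22
  have X23 := same hf2T hu2 hab3 c23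
  have X24 := cross hf2T hu2 hab4 c24
  have X31 := same hf3T hu3 hab1 c31
  have X32 := cross hf3T hu3 hab2 c32
  have X33 := same hf3T hu3 hab3 c33
  have X34 := cross hf3T hu3 hab4 c34
  have X41 := same hf4T hu4 hab1 c41
  have X42 := same hf4T hu4 hab2 c42
  have X43 := cross hf4T hu4 hab3 c43
  have X44 := cross hf4T hu4 hab4 c44
  have E2 : (SimpleGraph.fromEdgeSet (T \ {s(u₂, v₂)})).Reachable u₂ u₂ := SimpleGraph.Reachable.refl _
  have E2' : ¬ (SimpleGraph.fromEdgeSet (T \ {s(u₂, v₂)})).Reachable v₂ u₂ := fun h => sep hT hu2 hf2T h.symm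
  have E3 : (SimpleGraph.fromEdgeSet (T \ {s(u₃, v₃)})).Reachable u₃ u₃ := SimpleGraph.Reachable.refl _
  have E3' : ¬ (SimpleGraph.fromEdgeSet (T \ {s(u₃, v₃)})).Reachable v₃ u₃ := fun h => sep hT hu3 hf3T h.symm
  have E4 : (SimpleGraph.fromEdgeSet (T \ {s(u₄, v₄)})).Reachable u₄ u₄ := SimpleGraph.Reachable.refl _
  have E4' : ¬ (SimpleGraph.fromEdgeSet (T \ {s(u₄, v₄)})).Reachable v₄ u₄ := fun h => sep hT hu4 hf4T h.symm
  have N23 : (SimpleGraph.fromEdgeSet (T \ {s(u₂, v₂)})).Reachable u₃ u₂ ↔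
      (SimpleGraph.fromEdgeSet (T \ {s(u₂, v₂)})).Reachable v₃ u₂ :=
    (reach_iff hT hu2 hf2T u₃ v₃).mp
      (SimpleGraph.Adj.reachable ((SimpleGraph.fromEdgeSet_adj _).mpr ⟨⟨hf3T, g23.symm⟩, hu3⟩))
  have N24 : (SimpleGraph.fromEdgeSet (T \ {s(u₂, v₂)})).Reachable u₄ u₂ ↔
      (SimpleGraph.fromEdgeSet (T \ {s(u₂, v₂)})).Reachable v₄ u₂ :=
    (reach_iff hT hu2 hf2T u₄ v₄).mp
      (SimpleGraph.Adj.reachable ((SimpleGraph.fromEdgeSet_adj _).mpr ⟨⟨hf4T, g24.symm⟩, hu4⟩))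
  have N32 : (SimpleGraph.fromEdgeSet (T \ {s(u₃, v₃)})).Reachable u₂ u₃ ↔
      (SimpleGraph.fromEdgeSet (T \ {s(u₃, v₃)})).Reachable v₂ u₃ :=
    (reach_iff hT hu3 hf3T u₂ v₂).mp
      (SimpleGraph.Adj.reachable ((SimpleGraph.fromEdgeSet_adj _).mpr ⟨⟨hf2T, g23⟩, hu2⟩))
  have N34 : (SimpleGraph.fromEdgeSet (T \ {s(u₃, v₃)})).Reachable u₄ u₃ ↔
      (SimpleGraph.fromEdgeSet (T \ {s(u₃, v₃)})).Reachable v₄ u₃ :=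
    (reach_iff hT hu3 hf3T u₄ v₄).mp
      (SimpleGraph.Adj.reachable ((SimpleGraph.fromEdgeSet_adj _).mpr ⟨⟨hf4T, g34.symm⟩, hu4⟩))
  have N42 : (SimpleGraph.fromEdgeSet (T \ {s(u₄, v₄)})).Reachable u₂ u₄ ↔
      (SimpleGraph.fromEdgeSet (T \ {s(u₄, v₄)})).Reachable v₂ u₄ :=
    (reach_iff hT hu4 hf4T u₂ v₂).mp
      (SimpleGraph.Adj.reachable ((SimpleGraph.fromEdgeSet_adj _).mpr ⟨⟨hf2T, g24⟩, hu2⟩))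
  have N43 : (SimpleGraph.fromEdgeSet (T \ {s(u₄, v₄)})).Reachable u₃ u₄ ↔
      (SimpleGraph.fromEdgeSet (T \ {s(u₄, v₄)})).Reachable v₃ u₄ :=
    (reach_iff hT hu4 hf4T u₃ v₃).mp
      (SimpleGraph.Adj.reachable ((SimpleGraph.fromEdgeSet_adj _).mpr ⟨⟨hf3T, g34⟩, hu3⟩))
  have Lgen : ∀ {ui vi : V} (uj vj : V), ui ≠ vi → uj ≠ vj →
      s(ui, vi) ∈ T → s(uj, vj) ∈ T → ∀ w w',
      ¬((SimpleGraph.fromEdgeSet (T \ {s(ui, vi)})).Reachable w ui ↔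
          (SimpleGraph.fromEdgeSet (T \ {s(ui, vi)})).Reachable uj ui) →
      ¬((SimpleGraph.fromEdgeSet (T \ {s(ui, vi)})).Reachable w' ui ↔
          (SimpleGraph.fromEdgeSet (T \ {s(ui, vi)})).Reachable uj ui) →
      ((SimpleGraph.fromEdgeSet (T \ {s(uj, vj)})).Reachable w uj ↔
          (SimpleGraph.fromEdgeSet (T \ {s(uj, vj)})).Reachable w' uj) := by
    intro ui vi uj vj hi hj hfi hfj w w' hw hw'
    exact (reach_iff hT hj hfj w w').mp
      (L4 hT (fun hr => hw ((reach_iff hT hi hfi w uj).mp hr))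
        (fun hr => hw' ((reach_iff hT hi hfi w' uj).mp hr)))
  have L21 := Lgen u₁ v₁ hu2 hu1 hf2T hf1T
  have L31 := Lgen u₁ v₁ hu3 hu1 hf3T hf1T
  have L41 := Lgen u₁ v₁ hu4 hu1 hf4T hf1T
  have L12 := Lgen u₂ v₂ hu1 hu2 hf1T hf2T
  have L13 := Lgen u₃ v₃ hu1 hu3 hf1T hf3T
  have L14 := Lgen u₄ v₄ hu1 hu4 hf1T hf4T
  have L23 := Lgen u₃ v₃ hu2 hu3 hf2T hf3T
  have L32 := Lgen u₂ v₂ hu3 hu2 hf3T hf2T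
  have L24 := Lgen u₄ v₄ hu2 hu4 hf2T hf4T
  have L42 := Lgen u₂ v₂ hu4 hu2 hf4T hf2T
  have L34 := Lgen u₄ v₄ hu3 hu4 hf3T hf4T
  have L43 := Lgen u₃ v₃ hu4 hu3 hf4T hf3T
  exact core (fun w => (SimpleGraph.fromEdgeSet (T \ {s(u₁, v₁)})).Reachable w u₁) (fun w => (SimpleGraph.fromEdgeSet (T \ {s(u₂, v₂)})).Reachable w u₂) (fun w => (SimpleGraph.fromEdgeSet (T \ {s(u₃, v₃)})).Reachable w u₃) (fun w => (SimpleGraph.fromEdgeSet (T \ {s(u₄, v₄)})).Reachable w u₄)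
    u₁ u₂ v₂ u₃ v₃ u₄ v₄ a₁ b₁ a₂ b₂ a₃ b₃ a₄ b₄
    E2 E2' E3 E3' E4 E4'
    N32 N42 N23 N43 N24 N34
    X11 X12 X13 X14 X21 X22 X23 X24 X31 X32 X33 X34 X41 X42 X43 X44
    L21 L31 L41 L12 L13 L14 L23 L32 L24 L42 L34 L43
end

section
/- For every positive integer t and every real number p with 0 < p ≤ 1, one has ∑_{i=1}^{t} i^p ≤ (p/(p+1)) · (t^p (t+1)^p) / ((t+1)^p − t^p). -/
open Real Set

private lemma aux_amgm (x : ℝ) (hx0 : 0 < x) (hx1 : x < 1) (r : ℝ) (hr : r ≤ 0) :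
    2 ≤ (1 - x) ^ r + (1 + x) ^ r := by
  have ha : (0:ℝ) < 1 - x := by linarith
  have hb : (0:ℝ) < 1 + x := by linarith
  have hA := Real.rpow_pos_of_pos ha r
  have hB := Real.rpow_pos_of_pos hb r
  have hprod : 1 ≤ (1 - x) ^ r * (1 + x) ^ r := by
    rw [← Real.mul_rpow ha.le hb.le]
    exact Real.one_le_rpow_of_pos_of_le_one_of_nonpos (by nlinarith) (by nlinarith) hr
  nlinarith [sq_nonneg ((1 - x) ^ r - (1 + x) ^ r), sq_nonneg ((1 - x) ^ r + (1 + x) ^ r - 2)]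

private lemma aux_g (q : ℝ) (hq0 : 0 ≤ q) (hq1 : q ≤ 1) (s : ℝ) (hs0 : 0 ≤ s) (hs1 : s < 1) :
    (1 - s) ^ q + 2 * q * s ≤ (1 + s) ^ q := by
  set G : ℝ → ℝ := fun x => (1 + x) ^ q - ((1 - x) ^ q + 2 * q * x) with hGdef
  have hG : ∀ x : ℝ, -1 < x → x < 1 →
      HasDerivAt G (1 * q * (1 + x) ^ (q - 1) - ((-1) * q * (1 - x) ^ (q - 1) + 2 * q)) x := by
    intro x h1 h2
    have ha : (0:ℝ) < 1 - x := by linarith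
    have hb : (0:ℝ) < 1 + x := by linarith
    have d1 : HasDerivAt (fun y : ℝ => 1 + y) 1 x := by
      simpa using (hasDerivAt_id x).const_add (1:ℝ)
    have d2 : HasDerivAt (fun y : ℝ => 1 - y) (-1) x := by
      simpa using (hasDerivAt_id x).const_sub (1:ℝ)
    have e1 := d1.rpow_const (p := q) (Or.inl hb.ne')
    have e2 := d2.rpow_const (p := q) (Or.inl ha.ne')
    have e3 : HasDerivAt (fun y : ℝ => 2 * q * y) (2 * q) x := by
      simpa using (hasDerivAt_id x).const_mul (2 * q)
    exact e1.sub (e2.add e3)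
  have mono : MonotoneOn G (Set.Ico (0:ℝ) 1) := by
    apply monotoneOn_of_deriv_nonneg (convex_Ico 0 1)
    · intro x hx
      exact (hG x (by linarith [hx.1]) hx.2).continuousAt.continuousWithinAt
    · intro x hx
      rw [interior_Ico] at hx
      exact (hG x (by linarith [hx.1]) hx.2).differentiableAt.differentiableWithinAt
    · intro x hx
      rw [interior_Ico] at hx
      rw [(hG x (by linarith [hx.1]) hx.2).deriv]
      have h2 := aux_amgm x hx.1 hx.2 (q - 1) (by linarith)
      nlinarith [mul_nonneg hq0 (by linarith : (0:ℝ) ≤ (1 - x) ^ (q - 1) + (1 + x) ^ (q - 1) - 2)]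
  have h0 : G 0 ≤ G s := mono ⟨le_refl 0, zero_lt_one⟩ ⟨hs0, hs1⟩ hs0
  have hG0 : G 0 = 0 := by simp [hGdef]
  rw [hG0] at h0
  simp only [hGdef] at h0
  linarith

private lemma aux_F (p : ℝ) (hp0 : 0 < p) (hp1 : p ≤ 1) (s : ℝ) (hs0 : 0 ≤ s) (hs1 : s < 1) :
    (1 - s) ^ p + (1 + s) ^ p + (p - 1) * ((1 - s) ^ p * (1 + s) ^ p) ≤ 1 + p := by
  set F : ℝ → ℝ := fun x => (1 - x) ^ p + (1 + x) ^ p + (p - 1) * ((1 - x) ^ p * (1 + x) ^ p)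
    with hFdef
  have hF : ∀ x : ℝ, -1 < x → x < 1 →
      HasDerivAt F ((-1) * p * (1 - x) ^ (p - 1) + 1 * p * (1 + x) ^ (p - 1)
        + (p - 1) * (((-1) * p * (1 - x) ^ (p - 1)) * (1 + x) ^ p
          + (1 - x) ^ p * (1 * p * (1 + x) ^ (p - 1)))) x := by
    intro x h1 h2
    have ha : (0:ℝ) < 1 - x := by linarith
    have hb : (0:ℝ) < 1 + x := by linarith
    have d1 : HasDerivAt (fun y : ℝ => 1 + y) 1 x := by
      simpa using (hasDerivAt_id x).const_add (1:ℝ)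
    have d2 : HasDerivAt (fun y : ℝ => 1 - y) (-1) x := by
      simpa using (hasDerivAt_id x).const_sub (1:ℝ)
    have e1 := d1.rpow_const (p := p) (Or.inl hb.ne')
    have e2 := d2.rpow_const (p := p) (Or.inl ha.ne')
    exact (e2.add e1).add ((e2.mul e1).const_mul (p - 1))
  have anti : AntitoneOn F (Set.Ico (0:ℝ) 1) := by
    apply antitoneOn_of_deriv_nonpos (convex_Ico 0 1)
    · intro x hx
      exact (hF x (by linarith [hx.1]) hx.2).continuousAt.continuousWithinAt
    · intro x hx
      rw [interior_Ico] at hx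
      exact (hF x (by linarith [hx.1]) hx.2).differentiableAt.differentiableWithinAt
    · intro x hx
      rw [interior_Ico] at hx
      rw [(hF x (by linarith [hx.1]) hx.2).deriv]
      have ha : (0:ℝ) < 1 - x := by linarith [hx.2]
      have hb : (0:ℝ) < 1 + x := by linarith [hx.1]
      have hP := Real.rpow_pos_of_pos ha (p - 1)
      have hQ := Real.rpow_pos_of_pos hb (p - 1)
      have hPp : (1 - x) ^ p = (1 - x) * (1 - x) ^ (p - 1) := by
        have h := Real.rpow_add ha 1 (p - 1)
        rw [show (1:ℝ) + (p - 1) = p by ring, Real.rpow_one] at h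
        exact h
      have hQq : (1 + x) ^ p = (1 + x) * (1 + x) ^ (p - 1) := by
        have h := Real.rpow_add hb 1 (p - 1)
        rw [show (1:ℝ) + (p - 1) = p by ring, Real.rpow_one] at h
        exact h
      have cancelP : (1 - x) ^ (1 - p) * (1 - x) ^ (p - 1) = 1 := by
        rw [← Real.rpow_add ha]
        norm_num
      have cancelQ : (1 + x) ^ (1 - p) * (1 + x) ^ (p - 1) = 1 := by
        rw [← Real.rpow_add hb]
        norm_num
      have hg := aux_g (1 - p) (by linarith) (by linarith) x hx.1.le hx.2
      have e1 : (1 - x) ^ (1 - p) * ((1 - x) ^ (p - 1) * (1 + x) ^ (p - 1))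
          = (1 + x) ^ (p - 1) := by
        rw [← mul_assoc, cancelP, one_mul]
      have e2 : (1 + x) ^ (1 - p) * ((1 - x) ^ (p - 1) * (1 + x) ^ (p - 1))
          = (1 - x) ^ (p - 1) := by
        rw [mul_comm ((1 - x) ^ (p - 1)) ((1 + x) ^ (p - 1)), ← mul_assoc, cancelQ, one_mul]
      have key : (1 + x) ^ (p - 1) + 2 * (1 - p) * x * ((1 - x) ^ (p - 1) * (1 + x) ^ (p - 1))
          ≤ (1 - x) ^ (p - 1) := by
        have h := mul_le_mul_of_nonneg_right hg (le_of_lt (mul_pos hP hQ))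
        calc (1 + x) ^ (p - 1) + 2 * (1 - p) * x * ((1 - x) ^ (p - 1) * (1 + x) ^ (p - 1))
            = ((1 - x) ^ (1 - p) + 2 * (1 - p) * x)
              * ((1 - x) ^ (p - 1) * (1 + x) ^ (p - 1)) := by
              linear_combination -e1
          _ ≤ (1 + x) ^ (1 - p) * ((1 - x) ^ (p - 1) * (1 + x) ^ (p - 1)) := h
          _ = (1 - x) ^ (p - 1) := e2
      rw [hPp, hQq]
      nlinarith [mul_le_mul_of_nonneg_left key hp0.le]
  have h0 : F s ≤ F 0 := anti ⟨le_refl 0, zero_lt_one⟩ ⟨hs0, hs1⟩ hs0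
  have hF0 : F 0 = (1 - (0:ℝ)) ^ p + (1 + (0:ℝ)) ^ p
      + (p - 1) * ((1 - (0:ℝ)) ^ p * (1 + (0:ℝ)) ^ p) := rfl
  have hFs : F s = (1 - s) ^ p + (1 + s) ^ p + (p - 1) * ((1 - s) ^ p * (1 + s) ^ p) := rfl
  rw [hF0, hFs] at h0
  norm_num [Real.one_rpow] at h0
  linarith

private lemma aux_two (p : ℝ) (hp0 : 0 ≤ p) (hp1 : p ≤ 1) : (2:ℝ) ^ p ≤ 1 + p := by
  have h := convexOn_exp.2 (Set.mem_univ (0:ℝ)) (Set.mem_univ (Real.log 2))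
    (by linarith : (0:ℝ) ≤ 1 - p) hp0 (by ring)
  simp only [smul_eq_mul, mul_zero, zero_add, Real.exp_zero] at h
  rw [Real.rpow_def_of_pos (by norm_num : (0:ℝ) < 2)]
  calc Real.exp (Real.log 2 * p) = Real.exp ((1 - p) * 0 + p * Real.log 2) := by ring_nf
    _ ≤ (1 - p) * 1 + p * Real.exp (Real.log 2) := by
        simpa [Real.exp_zero] using h
    _ = 1 + p := by rw [Real.exp_log (by norm_num : (0:ℝ) < 2)]; ring

private lemma aux_step (p : ℝ) (hp0 : 0 < p) (hp1 : p ≤ 1) (x : ℝ) (hx : 2 ≤ x) :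
    p / (p + 1) * ((x - 1) ^ p * x ^ p) / (x ^ p - (x - 1) ^ p) + x ^ p
      ≤ p / (p + 1) * (x ^ p * (x + 1) ^ p) / ((x + 1) ^ p - x ^ p) := by
  have hx0 : (0:ℝ) < x := by linarith
  have hs0 : (0:ℝ) < 1 / x := by positivity
  have hs1 : 1 / x < 1 := by rw [div_lt_one hx0]; linarith
  set s : ℝ := 1 / x with hs
  have hb : (0:ℝ) < x ^ p := Real.rpow_pos_of_pos hx0 p
  set u : ℝ := (1 - s) ^ p with hu
  set v : ℝ := (1 + s) ^ p with hv
  have hu1 : u < 1 := Real.rpow_lt_one (by linarith) (by linarith) hp0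
  have hu0 : 0 < u := Real.rpow_pos_of_pos (by linarith) p
  have hv1 : 1 < v := Real.one_lt_rpow_iff_of_pos (by linarith) |>.mpr (Or.inl ⟨by linarith, hp0⟩)
  have hxm : (x - 1) ^ p = x ^ p * u := by
    rw [hu, ← Real.mul_rpow hx0.le (by linarith)]
    congr 1
    rw [hs]
    field_simp
  have hxp : (x + 1) ^ p = x ^ p * v := by
    rw [hv, ← Real.mul_rpow hx0.le (by linarith)]
    congr 1
    rw [hs]
    field_simp
  have hF := aux_F p hp0 hp1 s hs0.le hs1
  rw [← hu, ← hv] at hF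
  have hkey : 0 ≤ (1 + p) - (u + v + (p - 1) * (u * v)) := by linarith
  rw [hxm, hxp]
  have hp1' : (0:ℝ) < p + 1 := by linarith
  rw [← sub_nonneg]
  have hrw : p / (p + 1) * (x ^ p * (x ^ p * v)) / (x ^ p * v - x ^ p)
      - (p / (p + 1) * (x ^ p * u * x ^ p) / (x ^ p - x ^ p * u) + x ^ p)
      = x ^ p * ((1 + p) - (u + v + (p - 1) * (u * v))) / ((p + 1) * ((1 - u) * (v - 1))) := by
    rw [show x ^ p * v - x ^ p = x ^ p * (v - 1) by ring,
      show x ^ p - x ^ p * u = x ^ p * (1 - u) by ring]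
    have n1 : x ^ p ≠ 0 := hb.ne'
    have n2 : v - 1 ≠ 0 := by linarith
    have n3 : (1:ℝ) - u ≠ 0 := by linarith
    have n4 : p + 1 ≠ 0 := hp1'.ne'
    field_simp
    ring
  rw [hrw]
  exact div_nonneg (mul_nonneg hb.le hkey)
    (le_of_lt (mul_pos hp1' (mul_pos (by linarith) (by linarith))))

/-- For every positive integer `t` and real `0 < p ≤ 1`,
`∑_{i=1}^{t} i^p ≤ (p/(p+1)) · t^p (t+1)^p / ((t+1)^p − t^p)`. -/
theorem stmt_3 (t : ℕ) (ht : 1 ≤ t) (p : ℝ) (hp0 : 0 < p) (hp1 : p ≤ 1) :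
    ∑ i ∈ Finset.Icc 1 t, (i : ℝ) ^ p ≤
      (p / (p + 1)) * ((t : ℝ) ^ p * ((t : ℝ) + 1) ^ p) / (((t : ℝ) + 1) ^ p - (t : ℝ) ^ p) := by
  induction t with
  | zero => omega
  | succ n ih =>
    rcases Nat.eq_zero_or_pos n with hn | hn
    · subst hn
      norm_num
      have h2 : (2:ℝ) ^ p ≤ 1 + p := aux_two p hp0.le hp1
      have h2' : (1:ℝ) < (2:ℝ) ^ p :=
        Real.one_lt_rpow_iff_of_pos (by norm_num) |>.mpr (Or.inl ⟨by norm_num, hp0⟩)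
      rw [le_div_iff₀ (by linarith : (0:ℝ) < 2 ^ p - 1), div_mul_eq_mul_div,
        le_div_iff₀ (by linarith : (0:ℝ) < p + 1)]
      nlinarith
    · have hsum : ∑ i ∈ Finset.Icc 1 (n + 1), (i : ℝ) ^ p
          = (∑ i ∈ Finset.Icc 1 n, (i : ℝ) ^ p) + ((n:ℝ) + 1) ^ p := by
        rw [Finset.sum_Icc_succ_top (by omega : 1 ≤ n + 1)]
        push_cast
        ring_nf
      have ihn := ih hn
      have hstep := aux_step p hp0 hp1 ((n:ℝ) + 1) (by
        have : (1:ℝ) ≤ (n:ℝ) := by exact_mod_cast hn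
        linarith)
      have hcast : ((n:ℝ) + 1 - 1) = (n:ℝ) := by ring
      rw [hcast] at hstep
      push_cast
      calc (∑ i ∈ Finset.Icc 1 (n + 1), (i : ℝ) ^ p)
          = (∑ i ∈ Finset.Icc 1 n, (i : ℝ) ^ p) + ((n:ℝ) + 1) ^ p := hsum
        _ ≤ p / (p + 1) * ((n:ℝ) ^ p * ((n:ℝ) + 1) ^ p) / (((n:ℝ) + 1) ^ p - (n:ℝ) ^ p)
            + ((n:ℝ) + 1) ^ p := by linarith
        _ ≤ p / (p + 1) * (((n:ℝ) + 1) ^ p * (((n:ℝ) + 1) + 1) ^ p)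
            / ((((n:ℝ) + 1) + 1) ^ p - ((n:ℝ) + 1) ^ p) := hstep
end

section
/- Let q ∈ (−1, 0], let v ≥ 1 be a real number, and let u ∈ (0, v). Then ∫_u^v x^q dx ≤ (v − u) · u^{q/2} · v^{q/2}. -/
open Real Set

lemma convexOn_sinh_Ici : ConvexOn ℝ (Set.Ici (0:ℝ)) Real.sinh := by
  apply convexOn_of_deriv2_nonneg (convex_Ici 0) Real.continuous_sinh.continuousOn
    Real.differentiable_sinh.differentiableOn
  · rw [Real.deriv_sinh]; exact Real.differentiable_cosh.differentiableOn
  · intro x hx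
    simp only [Function.iterate_succ, Function.iterate_zero, Function.comp_apply, id_eq,
      Real.deriv_sinh, Real.deriv_cosh]
    rw [interior_Ici] at hx
    exact (Real.sinh_nonneg_iff).2 hx.le

lemma sinh_smul_le (s t : ℝ) (hs0 : 0 ≤ s) (hs1 : s ≤ 1) (ht : 0 ≤ t) :
    Real.sinh (s * t) ≤ s * Real.sinh t := by
  have := convexOn_sinh_Ici.2 (Set.mem_Ici.2 ht) (Set.mem_Ici.2 le_rfl) hs0 (by linarith)
    (by ring : s + (1 - s) = 1)
  simpa [Real.sinh_zero, smul_eq_mul, mul_comm] using this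

/-- For `q ∈ (−1, 0]`, `v ≥ 1`, and `u ∈ (0, v)`,
`∫_u^v x^q dx ≤ (v − u) · u^{q/2} · v^{q/2}`. -/
theorem stmt_4 (q : ℝ) (hq1 : -1 < q) (hq0 : q ≤ 0) (v : ℝ) (hv : 1 ≤ v)
    (u : ℝ) (hu0 : 0 < u) (huv : u < v) :
    ∫ x in u..v, x ^ q ≤ (v - u) * u ^ (q / 2) * v ^ (q / 2) := by
  have hv0 : (0:ℝ) < v := lt_of_le_of_lt (le_of_lt hu0) huv
  have hs : 0 < q + 1 := by linarith
  rw [integral_rpow (Or.inl hq1), div_le_iff₀ hs]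
  set a := Real.log u with ha
  set b := Real.log v with hb
  have hab : a < b := Real.log_lt_log hu0 huv
  set s := q + 1 with hsdef
  set m := (a + b) / 2 with hm
  set t := (b - a) / 2 with htdef
  have ht : 0 ≤ t := by simp only [htdef]; linarith
  clear_value a b s m t
  have key := sinh_smul_le s t hs.le (by linarith) ht
  rw [Real.sinh_eq, Real.sinh_eq] at key
  have key' : Real.exp (s*t) - Real.exp (-(s*t)) ≤ s * (Real.exp t - Real.exp (-t)) := by
    nlinarith [key]
  have hvu : v - u = Real.exp (Real.log v) - Real.exp (Real.log u) := by
    rw [Real.exp_log hv0, Real.exp_log hu0]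
  rw [hvu]
  simp only [Real.rpow_def_of_pos hu0, Real.rpow_def_of_pos hv0, ← ha, ← hb, ← hsdef]
  have h1 : Real.exp (b * s) = Real.exp (s*m) * Real.exp (s*t) := by
    rw [← Real.exp_add]; congr 1; simp only [hm, htdef]; ring
  have h2 : Real.exp (a * s) = Real.exp (s*m) * Real.exp (-(s*t)) := by
    rw [← Real.exp_add]; congr 1; simp only [hm, htdef]; ring
  have e1 : Real.exp b * Real.exp (a*(q/2)) * Real.exp (b*(q/2))
      = Real.exp (s*m) * Real.exp t := by
    rw [← Real.exp_add, ← Real.exp_add, ← Real.exp_add]; congr 1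
    simp only [hsdef, hm, htdef]; ring
  have e2 : Real.exp a * Real.exp (a*(q/2)) * Real.exp (b*(q/2))
      = Real.exp (s*m) * Real.exp (-t) := by
    rw [← Real.exp_add, ← Real.exp_add, ← Real.exp_add]; congr 1
    simp only [hsdef, hm, htdef]; ring
  have hR : (Real.exp b - Real.exp a) * Real.exp (a * (q / 2)) * Real.exp (b * (q / 2)) * s
      = Real.exp (s * m) * (s * (Real.exp t - Real.exp (-t))) := by
    linear_combination s * e1 - s * e2
  rw [h1, h2, hR, ← mul_sub]
  exact mul_le_mul_of_nonneg_left key' (Real.exp_pos _).le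
end

section
/- Let c ≥ 3 be an integer, set p = 2/(c−1), and let t' ≥ 1 be an integer. Then the series ∑_{t=t'}^{∞} 1/S_p(t) converges, and (2c/(c+1)) · (t')^p · ∑_{t=t'}^{∞} 1/S_p(t) > c · (t'/(t'+1))^p. Moreover c · (t'/(t'+1))^p > 1, so the left-hand side is strictly greater than 1. -/
open Filter Topology

private lemma aux_bern_up {p : ℝ} (hp0 : 0 < p) {x : ℝ} (hx : 1 ≤ x) :
    (p + 1) * x ^ p ≤ (x + 1) ^ (p + 1) - x ^ (p + 1) := by
  have hx0 : (0 : ℝ) < x := lt_of_lt_of_le one_pos hx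
  have h1x : 0 ≤ 1 / x := by positivity
  have h1 : (1 : ℝ) + (p + 1) * (1 / x) ≤ (1 + 1 / x) ^ (p + 1) :=
    one_add_mul_self_le_rpow_one_add (by linarith) (by linarith)
  have h2 : x * (1 + 1 / x) = x + 1 := by field_simp
  have h3 : (x + 1) ^ (p + 1) = x ^ (p + 1) * (1 + 1 / x) ^ (p + 1) := by
    rw [← Real.mul_rpow hx0.le (by linarith), h2]
  have h4 : x ^ (p + 1) * (1 + (p + 1) * (1 / x)) ≤ (x + 1) ^ (p + 1) := by
    rw [h3]
    exact mul_le_mul_of_nonneg_left h1 (Real.rpow_nonneg hx0.le _)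
  have hxp : x ^ (p + 1) * (1 / x) = x ^ p := by
    rw [Real.rpow_add_one hx0.ne']; field_simp
  have h5 : x ^ (p + 1) * (1 + (p + 1) * (1 / x)) =
      x ^ (p + 1) + (p + 1) * (x ^ (p + 1) * (1 / x)) := by ring
  rw [hxp] at h5
  linarith

private lemma aux_bern_down {p : ℝ} (hp0 : 0 < p) {x : ℝ} (hx : 1 ≤ x) :
    x ^ (p + 1) - (x - 1) ^ (p + 1) ≤ (p + 1) * x ^ p := by
  have hx0 : (0 : ℝ) < x := lt_of_lt_of_le one_pos hx
  have h1x : 0 ≤ 1 / x := by positivity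
  have h1x' : 1 / x ≤ 1 := by rw [div_le_one hx0]; linarith
  have h1 : (1 : ℝ) + (p + 1) * (-(1 / x)) ≤ (1 + -(1 / x)) ^ (p + 1) :=
    one_add_mul_self_le_rpow_one_add (by linarith) (by linarith)
  have h2 : x * (1 + -(1 / x)) = x - 1 := by field_simp; ring
  have h3 : (x - 1) ^ (p + 1) = x ^ (p + 1) * (1 + -(1 / x)) ^ (p + 1) := by
    rw [← Real.mul_rpow hx0.le (by linarith), h2]
  have h4 : x ^ (p + 1) * (1 + (p + 1) * (-(1 / x))) ≤ (x - 1) ^ (p + 1) := by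
    rw [h3]
    exact mul_le_mul_of_nonneg_left h1 (Real.rpow_nonneg hx0.le _)
  have hxp : x ^ (p + 1) * (1 / x) = x ^ p := by
    rw [Real.rpow_add_one hx0.ne']; field_simp
  have h5 : x ^ (p + 1) * (1 + (p + 1) * (-(1 / x))) =
      x ^ (p + 1) - (p + 1) * (x ^ (p + 1) * (1 / x)) := by ring
  rw [hxp] at h5
  linarith

private lemma aux_neg {p : ℝ} (hp0 : 0 < p) (hp1 : p ≤ 1) {x : ℝ} (hx : 1 ≤ x) :
    x ^ (-p) - (x + 1) ^ (-p) ≤ p * x ^ (-(p + 1)) := by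
  have hx0 : (0 : ℝ) < x := lt_of_lt_of_le one_pos hx
  have h1x : 0 ≤ 1 / x := by positivity
  have hb0 : (0 : ℝ) < 1 + 1 / x := by linarith
  have hb : (1 + 1 / x) ^ p ≤ 1 + p * (1 / x) :=
    rpow_one_add_le_one_add_mul_self (by linarith) hp0.le hp1
  have hbpos : 0 < (1 + 1 / x) ^ p := Real.rpow_pos_of_pos hb0 p
  -- key Bernoulli for negative exponent
  have key : 1 - p * (1 / x) ≤ (1 + 1 / x) ^ (-p) := by
    rw [Real.rpow_neg hb0.le, ← one_div, le_div_iff₀ hbpos]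
    rcases le_or_gt (1 - p * (1 / x)) 0 with h | h
    · exact le_trans (mul_nonpos_of_nonpos_of_nonneg h hbpos.le) zero_le_one
    · nlinarith [mul_le_mul_of_nonneg_left hb h.le, sq_nonneg (p * (1 / x))]
  have h2 : x * (1 + 1 / x) = x + 1 := by field_simp
  have h3 : (x + 1) ^ (-p) = x ^ (-p) * (1 + 1 / x) ^ (-p) := by
    rw [← Real.mul_rpow hx0.le hb0.le, h2]
  have h4 : x ^ (-p) * (1 - p * (1 / x)) ≤ (x + 1) ^ (-p) := by
    rw [h3]
    exact mul_le_mul_of_nonneg_left key (Real.rpow_nonneg hx0.le _)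
  have hxp : x ^ (-p) * (1 / x) = x ^ (-(p + 1)) := by
    rw [show -(p + 1) = -p + -1 by ring, Real.rpow_add hx0, Real.rpow_neg_one]
    ring
  have h5 : x ^ (-p) * (1 - p * (1 / x)) =
      x ^ (-p) - p * (x ^ (-p) * (1 / x)) := by ring
  rw [hxp] at h5
  linarith

/-- For integers `c ≥ 3`, `p = 2/(c−1)` and integer `t' ≥ 1`, with
`S_p(t) = ∑_{i=1}^{t} i^p`: the series `∑_{t=t'}^{∞} 1/S_p(t)` converges,
`(2c/(c+1)) · (t')^p · ∑_{t=t'}^{∞} 1/S_p(t) > c · (t'/(t'+1))^p`, and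
`c · (t'/(t'+1))^p > 1`. -/
theorem stmt_7 (c : ℕ) (hc : 3 ≤ c) (p : ℝ) (hp : p = 2 / ((c : ℝ) - 1))
    (t' : ℕ) (ht' : 1 ≤ t')
    (S : ℕ → ℝ) (hS : ∀ t : ℕ, S t = ∑ i ∈ Finset.Icc 1 t, (i : ℝ) ^ p) :
    Summable (fun t : ℕ => 1 / S (t' + t)) ∧
      (2 * (c : ℝ) / ((c : ℝ) + 1)) * (t' : ℝ) ^ p * ∑' t : ℕ, 1 / S (t' + t) >
        (c : ℝ) * ((t' : ℝ) / ((t' : ℝ) + 1)) ^ p ∧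
      (c : ℝ) * ((t' : ℝ) / ((t' : ℝ) + 1)) ^ p > 1 := by
  have hc3 : (3 : ℝ) ≤ (c : ℝ) := by exact_mod_cast hc
  have hc1 : (2 : ℝ) ≤ (c : ℝ) - 1 := by linarith
  have hp0 : 0 < p := by rw [hp]; positivity
  have hp1 : p ≤ 1 := by
    rw [hp, div_le_one (by linarith)]; linarith
  have hq0 : (0 : ℝ) < p + 1 := by linarith
  have hq1 : (1 : ℝ) < p + 1 := by linarith
  -- recurrence for S
  have hSrec : ∀ t : ℕ, S (t + 1) = S t + ((t : ℝ) + 1) ^ p := by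
    intro t
    rw [hS, hS, Finset.sum_Icc_succ_top (Nat.succ_le_succ (Nat.zero_le t))]
    push_cast; ring
  have hS0 : S 0 = 0 := by rw [hS]; simp
  -- upper bound for S
  have hSup : ∀ t : ℕ, S t ≤ (((t : ℝ) + 1) ^ (p + 1) - 1) / (p + 1) := by
    intro t
    induction t with
    | zero => rw [hS0]; simp [Real.one_rpow]
    | succ t ih =>
      have hb := aux_bern_up hp0 (by push_cast; linarith : (1 : ℝ) ≤ (t : ℝ) + 1)
      rw [hSrec t]
      rw [le_div_iff₀ hq0] at ih ⊢
      push_cast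
      have : ((t : ℝ) + 1 + 1) = (t : ℝ) + 2 := by ring
      nlinarith [hb]
  -- lower bound for S
  have hSlow : ∀ t : ℕ, ((t : ℝ)) ^ (p + 1) / (p + 1) ≤ S t := by
    intro t
    induction t with
    | zero =>
      rw [hS0]
      simp [Real.zero_rpow (by positivity : p + 1 ≠ 0)]
    | succ t ih =>
      have hb := aux_bern_down hp0 (by push_cast; linarith : (1 : ℝ) ≤ (t : ℝ) + 1)
      rw [hSrec t]
      rw [div_le_iff₀ hq0] at ih ⊢
      push_cast
      have h1 : ((t : ℝ) + 1 - 1) = (t : ℝ) := by ring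
      rw [h1] at hb
      nlinarith [hb]
  -- positivity of S on [1, ∞)
  have hSpos : ∀ t : ℕ, 1 ≤ t → 0 < S t := by
    intro t ht
    have h1 : (1 : ℝ) ≤ (t : ℝ) := by exact_mod_cast ht
    have := hSlow t
    have h2 : 0 < ((t : ℝ)) ^ (p + 1) / (p + 1) := by positivity
    linarith
  -- Summability
  have hf_nonneg : ∀ k : ℕ, 0 ≤ 1 / S (t' + k) := by
    intro k
    have := hSpos (t' + k) (le_trans ht' (Nat.le_add_right _ _))
    positivity
  have hf_le : ∀ k : ℕ, 1 / S (t' + k) ≤ (p + 1) * ((t' + k : ℕ) : ℝ) ^ (-(p + 1)) := by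
    intro k
    set x : ℝ := ((t' + k : ℕ) : ℝ) with hxdef
    have hx1 : (1 : ℝ) ≤ x := by
      have h : 1 ≤ t' + k := le_trans ht' (Nat.le_add_right _ _)
      rw [hxdef]; exact_mod_cast h
    have hx0 : (0 : ℝ) < x := lt_of_lt_of_le one_pos hx1
    have hlo : x ^ (p + 1) / (p + 1) ≤ S (t' + k) := hSlow (t' + k)
    have hpos : (0 : ℝ) < x ^ (p + 1) / (p + 1) := by positivity
    have h1 : 1 / S (t' + k) ≤ 1 / (x ^ (p + 1) / (p + 1)) :=
      one_div_le_one_div_of_le hpos hlo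
    have h2 : 1 / (x ^ (p + 1) / (p + 1)) = (p + 1) * x ^ (-(p + 1)) := by
      rw [one_div_div, div_eq_mul_inv, Real.rpow_neg hx0.le]
    linarith [h1, h2.le, h2.ge]
  have hsum0 : Summable (fun n : ℕ => ((n : ℝ)) ^ (-(p + 1))) :=
    Real.summable_nat_rpow.2 (by linarith)
  have hsum1 : Summable (fun k : ℕ => ((t' + k : ℕ) : ℝ) ^ (-(p + 1))) := by
    have := (summable_nat_add_iff (f := fun n : ℕ => ((n : ℝ)) ^ (-(p + 1))) t').2 hsum0
    simpa [Nat.add_comm] using this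
  have hfsummable : Summable (fun k : ℕ => 1 / S (t' + k)) :=
    Summable.of_nonneg_of_le hf_nonneg hf_le (hsum1.mul_left (p + 1))
  refine ⟨hfsummable, ?_, ?_⟩
  · -- main inequality
    set u : ℕ → ℝ := fun k => ((t' : ℝ) + k + 1) ^ (-p) with hudef
    have hubase : ∀ k : ℕ, (1 : ℝ) ≤ (t' : ℝ) + k + 1 := by
      intro k
      have : (0 : ℝ) ≤ (t' : ℝ) + k := by positivity
      linarith
    have humono : ∀ k : ℕ, u (k + 1) ≤ u k := by
      intro k
      apply Real.rpow_le_rpow_of_nonpos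
        (lt_of_lt_of_le one_pos (hubase k)) (by push_cast; linarith) (by linarith)
    have hutend : Tendsto u atTop (𝓝 0) := by
      have h1 : Tendsto (fun k : ℕ => (t' : ℝ) + k + 1) atTop atTop := by
        apply tendsto_atTop_add_const_right
        exact tendsto_atTop_add_const_left _ _ tendsto_natCast_atTop_atTop
      exact (tendsto_rpow_neg_atTop hp0).comp h1
    have hHas : HasSum (fun k => u k - u (k + 1)) (u 0) := by
      rw [hasSum_iff_tendsto_nat_of_nonneg (fun k => sub_nonneg.2 (humono k))]
      have h1 : ∀ n : ℕ, ∑ i ∈ Finset.range n, (u i - u (i + 1)) = u 0 - u n := by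
        intro n; exact Finset.sum_range_sub' u n
      simp only [h1]
      simpa using (tendsto_const_nhds (x := u 0)).sub hutend
    have hg : HasSum (fun k => ((p + 1) / p) * (u k - u (k + 1)))
        (((p + 1) / p) * u 0) := hHas.mul_left _
    -- termwise strict bound
    have hlt : ∀ k : ℕ, ((p + 1) / p) * (u k - u (k + 1)) < 1 / S (t' + k) := by
      intro k
      set x : ℝ := (t' : ℝ) + k + 1 with hxdef
      have hx1 : (1 : ℝ) ≤ x := hubase k
      have hx0 : (0 : ℝ) < x := lt_of_lt_of_le one_pos hx1
      have hu1 : u (k + 1) = (x + 1) ^ (-p) := by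
        rw [hudef, hxdef]; push_cast; ring_nf
      have step1 : u k - u (k + 1) ≤ p * x ^ (-(p + 1)) := by
        rw [hu1]; exact aux_neg hp0 hp1 hx1
      have step2 : ((p + 1) / p) * (u k - u (k + 1)) ≤ (p + 1) * x ^ (-(p + 1)) := by
        have h1 : ((p + 1) / p) * (p * x ^ (-(p + 1))) = (p + 1) * x ^ (-(p + 1)) := by
          field_simp
        calc ((p + 1) / p) * (u k - u (k + 1))
            ≤ ((p + 1) / p) * (p * x ^ (-(p + 1))) :=
              mul_le_mul_of_nonneg_left step1 (by positivity)
          _ = (p + 1) * x ^ (-(p + 1)) := h1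
      have hScast : ((t' + k : ℕ) : ℝ) + 1 = x := by push_cast; ring
      have hSupk : S (t' + k) < x ^ (p + 1) / (p + 1) := by
        have h1 := hSup (t' + k)
        rw [hScast] at h1
        have h2 : (x ^ (p + 1) - 1) / (p + 1) < x ^ (p + 1) / (p + 1) := by
          rw [div_lt_div_iff₀ hq0 hq0]
          nlinarith [hq0]
        linarith
      have hSposk : 0 < S (t' + k) := hSpos _ (le_trans ht' (Nat.le_add_right _ _))
      have step3 : (p + 1) * x ^ (-(p + 1)) < 1 / S (t' + k) := by
        have h1 : 1 / (x ^ (p + 1) / (p + 1)) < 1 / S (t' + k) :=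
          one_div_lt_one_div_of_lt hSposk hSupk
        have h2 : 1 / (x ^ (p + 1) / (p + 1)) = (p + 1) * x ^ (-(p + 1)) := by
          rw [one_div_div, div_eq_mul_inv, Real.rpow_neg hx0.le]
        linarith
      linarith
    have htsum : ((p + 1) / p) * u 0 < ∑' k : ℕ, 1 / S (t' + k) := by
      have h1 := Summable.tsum_lt_tsum (fun k => (hlt k).le) (hlt 0) hg.summable hfsummable
      rwa [hg.tsum_eq] at h1
    -- multiply through
    have hM : 0 < 2 * (c : ℝ) / ((c : ℝ) + 1) * (t' : ℝ) ^ p := by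
      have ht'0 : (0 : ℝ) < (t' : ℝ) := by exact_mod_cast ht'
      positivity
    have hmul := mul_lt_mul_of_pos_left htsum hM
    have hu0 : u 0 = ((t' : ℝ) + 1) ^ (-p) := by rw [hudef]; norm_num
    have hqp : (p + 1) / p = ((c : ℝ) + 1) / 2 := by
      rw [hp]; field_simp; ring
    have ht'0 : (0 : ℝ) < (t' : ℝ) := by exact_mod_cast ht'
    have hT0 : (0 : ℝ) < (t' : ℝ) + 1 := by linarith
    have hTp : (0 : ℝ) < ((t' : ℝ) + 1) ^ p := Real.rpow_pos_of_pos hT0 p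
    have heq : 2 * (c : ℝ) / ((c : ℝ) + 1) * (t' : ℝ) ^ p * (((p + 1) / p) * u 0) =
        (c : ℝ) * ((t' : ℝ) / ((t' : ℝ) + 1)) ^ p := by
      rw [hu0, hqp, Real.div_rpow ht'0.le hT0.le, Real.rpow_neg hT0.le]
      have hc0 : (c : ℝ) + 1 ≠ 0 := by linarith
      field_simp
    rw [heq] at hmul
    exact hmul
  · -- last inequality
    have ht'0 : (0 : ℝ) < (t' : ℝ) := by exact_mod_cast ht'
    have h1 : (1 : ℝ) / 2 ≤ (t' : ℝ) / ((t' : ℝ) + 1) := by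
      rw [div_le_div_iff₀ (by norm_num) (by linarith)]
      have : (1 : ℝ) ≤ (t' : ℝ) := by exact_mod_cast ht'
      linarith
    have h2 : ((1 : ℝ) / 2) ^ p ≤ ((t' : ℝ) / ((t' : ℝ) + 1)) ^ p :=
      Real.rpow_le_rpow (by norm_num) h1 hp0.le
    have h3 : ((1 : ℝ) / 2) ^ p = (2 : ℝ) ^ (-p) := by
      rw [one_div, Real.inv_rpow (by norm_num), ← Real.rpow_neg (by norm_num)]
    have h4 : (2 : ℝ) ^ (-1 : ℝ) ≤ (2 : ℝ) ^ (-p) :=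
      Real.rpow_le_rpow_of_exponent_le one_le_two (by linarith)
    have h5 : (2 : ℝ) ^ (-1 : ℝ) = 1 / 2 := by
      rw [Real.rpow_neg_one]; norm_num
    have hX : (1 : ℝ) / 2 ≤ ((t' : ℝ) / ((t' : ℝ) + 1)) ^ p := by
      calc (1 : ℝ) / 2 = (2 : ℝ) ^ (-1 : ℝ) := h5.symm
        _ ≤ (2 : ℝ) ^ (-p) := h4
        _ = ((1 : ℝ) / 2) ^ p := h3.symm
        _ ≤ ((t' : ℝ) / ((t' : ℝ) + 1)) ^ p := h2
    have hc0 : (0 : ℝ) ≤ (c : ℝ) := by linarith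
    nlinarith [mul_le_mul_of_nonneg_left hX hc0]
end

section
/- Let c ≥ 3 be an integer, let N ≥ 1 be an integer, and let z₁, …, z_N be nonnegative reals with ∑_{t=1}^{N} z_t ≥ c. For 1 ≤ t ≤ N+1 set Z_t = ∑_{i=1}^{t−1} z_i and p_t = (max(0, 1 − Z_t/c))^c. Then ∑_{t=1}^{N} z_t · (p_t + p_{t+1}) ≥ 2c/(c+1). -/
lemma pair_ineq (A B : ℝ) (hB : 0 ≤ B) (hAB : B ≤ A) (c i : ℕ) (hi : i ≤ c) :
    A ^ i * B ^ (c - i) + A ^ (c - i) * B ^ i ≤ A ^ c + B ^ c := by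
  have h1 : B ^ i ≤ A ^ i := pow_le_pow_left₀ hB hAB i
  have h2 : B ^ (c - i) ≤ A ^ (c - i) := pow_le_pow_left₀ hB hAB _
  have hA : A ^ c = A ^ i * A ^ (c - i) := by
    rw [← pow_add, Nat.add_sub_cancel' hi]
  have hBc : B ^ c = B ^ i * B ^ (c - i) := by
    rw [← pow_add, Nat.add_sub_cancel' hi]
  nlinarith [mul_nonneg (sub_nonneg.2 h1) (sub_nonneg.2 h2)]

lemma sum_ineq (A B : ℝ) (hB : 0 ≤ B) (hAB : B ≤ A) (c : ℕ) :
    2 * ∑ i ∈ Finset.range (c + 1), A ^ i * B ^ (c - i)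
      ≤ ((c : ℝ) + 1) * (A ^ c + B ^ c) := by
  have hrefl : ∑ i ∈ Finset.range (c + 1), A ^ (c - i) * B ^ i
      = ∑ i ∈ Finset.range (c + 1), A ^ i * B ^ (c - i) := by
    rw [← Finset.sum_range_reflect (fun i => A ^ (c - i) * B ^ i) (c + 1)]
    apply Finset.sum_congr rfl
    intro i hi
    simp only [Finset.mem_range] at hi
    have e1 : c + 1 - 1 - i = c - i := by omega
    have e2 : c - (c - i) = i := by omega
    rw [e1, e2]
  have key : ∑ i ∈ Finset.range (c + 1),
      (A ^ i * B ^ (c - i) + A ^ (c - i) * B ^ i)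
      ≤ ∑ _i ∈ Finset.range (c + 1), (A ^ c + B ^ c) := by
    apply Finset.sum_le_sum
    intro i hi
    exact pair_ineq A B hB hAB c i (by simp only [Finset.mem_range] at hi; omega)
  rw [Finset.sum_add_distrib, hrefl] at key
  simp only [Finset.sum_const, Finset.card_range, nsmul_eq_mul] at key
  push_cast at key ⊢
  linarith

lemma key_step (c : ℕ) (hc : 1 ≤ c) (a w : ℝ) (ha : 0 ≤ a) (hw : 0 ≤ w) :
    2 * (c : ℝ) / ((c : ℝ) + 1) *
        ((max 0 (1 - a / c)) ^ (c + 1) - (max 0 (1 - (a + w) / c)) ^ (c + 1))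
      ≤ w * ((max 0 (1 - a / c)) ^ c + (max 0 (1 - (a + w) / c)) ^ c) := by
  have hcpos : (0 : ℝ) < c := by exact_mod_cast hc
  set A := max 0 (1 - a / (c : ℝ)) with hAdef
  set B := max 0 (1 - (a + w) / (c : ℝ)) with hBdef
  have hB0 : 0 ≤ B := le_max_left 0 _
  have hA0 : 0 ≤ A := le_max_left 0 _
  have hdiv : a / (c : ℝ) ≤ (a + w) / c :=
    (div_le_div_iff_of_pos_right hcpos).mpr (by linarith)
  have hAB : B ≤ A := max_le_max le_rfl (by linarith)
  -- c * (A - B) ≤ w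
  have hcz : (c : ℝ) * (A - B) ≤ w := by
    rcases le_or_gt 0 (1 - (a + w) / (c : ℝ)) with h | h
    · have hBeq : B = 1 - (a + w) / c := max_eq_right h
      have hAeq : A = 1 - a / c := max_eq_right (by linarith)
      rw [hAeq, hBeq]
      field_simp
      linarith
    · have hBeq : B = 0 := max_eq_left h.le
      rcases le_or_gt (1 - a / (c : ℝ)) 0 with h2 | h2
      · have hAeq : A = 0 := max_eq_left h2
        rw [hAeq, hBeq]; simpa using hw
      · have hAeq : A = 1 - a / c := max_eq_right h2.le
        rw [hAeq, hBeq]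
        have : (c : ℝ) < a + w := by
          have h1 : 1 < (a + w) / (c : ℝ) := by linarith
          exact (one_lt_div hcpos).mp h1
        field_simp
        linarith
  have hfac : A ^ (c + 1) - B ^ (c + 1)
      = (∑ i ∈ Finset.range (c + 1), A ^ i * B ^ (c - i)) * (A - B) := by
    have := geom_sum₂_mul A B (c + 1)
    simp only [Nat.add_sub_cancel] at this
    linarith [this]
  have hSA : 0 ≤ A - B := sub_nonneg.2 hAB
  have h2 : 2 * (A ^ (c + 1) - B ^ (c + 1))
      ≤ ((c : ℝ) + 1) * (A ^ c + B ^ c) * (A - B) := by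
    rw [hfac]
    calc 2 * ((∑ i ∈ Finset.range (c + 1), A ^ i * B ^ (c - i)) * (A - B))
        = (2 * ∑ i ∈ Finset.range (c + 1), A ^ i * B ^ (c - i)) * (A - B) := by ring
      _ ≤ ((c : ℝ) + 1) * (A ^ c + B ^ c) * (A - B) :=
          mul_le_mul_of_nonneg_right (sum_ineq A B hB0 hAB c) hSA
  have hc1 : (0 : ℝ) < (c : ℝ) + 1 := by linarith
  rw [div_mul_eq_mul_div, div_le_iff₀ hc1]
  have hS0 : 0 ≤ A ^ c + B ^ c := by positivity
  nlinarith [mul_le_mul_of_nonneg_left h2 hcpos.le,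
    mul_le_mul_of_nonneg_left hcz hS0]

theorem tele_sum (F : ℕ → ℝ) (N : ℕ) :
    ∑ t ∈ Finset.Icc 1 N, (F (t + 1) - F t) = F (N + 1) - F 1 := by
  induction N with
  | zero => simp
  | succ n ih =>
    rw [Finset.sum_Icc_succ_top (by omega : 1 ≤ n + 1), ih]
    ring

/-- Key convexity estimate: if `z₁,…,z_N ≥ 0` with `∑ z_t ≥ c`, and
`Z_t = ∑_{i<t} z_i`, `p_t = (max(0, 1 − Z_t/c))^c`, then
`∑_{t=1}^{N} z_t (p_t + p_{t+1}) ≥ 2c/(c+1)`. -/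
theorem stmt_8 (c : ℕ) (hc : 3 ≤ c) (N : ℕ) (hN : 1 ≤ N)
    (z : ℕ → ℝ) (hz : ∀ t ∈ Finset.Icc 1 N, 0 ≤ z t)
    (hsum : (c : ℝ) ≤ ∑ t ∈ Finset.Icc 1 N, z t)
    (Z : ℕ → ℝ) (hZ : ∀ t : ℕ, Z t = ∑ i ∈ Finset.Ico 1 t, z i)
    (p : ℕ → ℝ) (hp : ∀ t : ℕ, p t = (max 0 (1 - Z t / (c : ℝ))) ^ c) :
    2 * (c : ℝ) / ((c : ℝ) + 1) ≤ ∑ t ∈ Finset.Icc 1 N, z t * (p t + p (t + 1)) := by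
  have hcpos : (0 : ℝ) < c := by positivity
  set F : ℕ → ℝ := fun t =>
    2 * (c : ℝ) / ((c : ℝ) + 1) * (1 - (max 0 (1 - Z t / (c : ℝ))) ^ (c + 1))
    with hF
  have hZsucc : ∀ t : ℕ, 1 ≤ t → Z (t + 1) = Z t + z t := by
    intro t ht
    rw [hZ, hZ, Finset.sum_Ico_succ_top ht]
  have step : ∀ t ∈ Finset.Icc 1 N, F (t + 1) - F t ≤ z t * (p t + p (t + 1)) := by
    intro t ht
    have ht' := Finset.mem_Icc.mp ht
    have hZt : 0 ≤ Z t := by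
      rw [hZ]
      apply Finset.sum_nonneg
      intro i hi
      have := Finset.mem_Ico.mp hi
      exact hz i (Finset.mem_Icc.mpr ⟨this.1, by omega⟩)
    have hkey := key_step c (by omega) (Z t) (z t) hZt (hz t ht)
    rw [hp t, hp (t + 1), hZsucc t ht'.1]
    simp only [hF, hZsucc t ht'.1]
    linarith [hkey]
  have hF1 : F 1 = 0 := by
    have : Z 1 = 0 := by rw [hZ]; simp
    simp [hF, this]
  have hFN : F (N + 1) = 2 * (c : ℝ) / ((c : ℝ) + 1) := by
    have hZN : Z (N + 1) = ∑ t ∈ Finset.Icc 1 N, z t := by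
      rw [hZ, Finset.Ico_add_one_right_eq_Icc]
    have hge : (c : ℝ) ≤ Z (N + 1) := by rw [hZN]; exact hsum
    have h0 : 1 - Z (N + 1) / (c : ℝ) ≤ 0 := by
      rw [sub_nonpos, le_div_iff₀ hcpos]
      linarith
    have hmax : max 0 (1 - Z (N + 1) / (c : ℝ)) = 0 := max_eq_left h0
    simp [hF, hmax]
  calc 2 * (c : ℝ) / ((c : ℝ) + 1) = F (N + 1) - F 1 := by rw [hF1, hFN]; ring
    _ = ∑ t ∈ Finset.Icc 1 N, (F (t + 1) - F t) := (tele_sum F N).symm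
    _ ≤ ∑ t ∈ Finset.Icc 1 N, z t * (p t + p (t + 1)) := Finset.sum_le_sum step
end

section
/- Let c ≥ 3 be an integer, set p = 2/(c−1), and let a and t be integers with 1 ≤ a ≤ t. Then (2c/(c+1)) · a^p · ∑_{q=a}^{t−1} 1/S_p(q) ≥ c · (1 − (a/t)^p). -/
open Real Set

private lemma convexOn_sinh' : ConvexOn ℝ (Ici 0) Real.sinh := by
  apply convexOn_of_deriv2_nonneg (convex_Ici 0)
  · exact Real.continuous_sinh.continuousOn
  · exact Real.differentiable_sinh.differentiableOn
  · rw [Real.deriv_sinh]; exact Real.differentiable_cosh.differentiableOn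
  · intro x hx
    rw [interior_Ici] at hx
    have : deriv (deriv Real.sinh) = Real.sinh := by
      rw [Real.deriv_sinh, Real.deriv_cosh]
    rw [Function.iterate_succ, Function.iterate_one, Function.comp_apply, this]
    exact Real.sinh_nonneg_iff.mpr hx.le

private lemma sinh_mul_le' (p u : ℝ) (hp0 : 0 ≤ p) (hp1 : p ≤ 1) (hu : 0 ≤ u) :
    Real.sinh (p * u) ≤ p * Real.sinh u := by
  have := convexOn_sinh'.2 (mem_Ici.mpr hu) (mem_Ici.mpr (le_refl (0:ℝ)))
    hp0 (by linarith : (0:ℝ) ≤ 1 - p) (by ring)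
  simpa [Real.sinh_zero] using this

private lemma exp_core' (p L M : ℝ) (hp0 : 0 ≤ p) (hp1 : p ≤ 1) (hLM : L ≤ M)
    (h1 : Real.exp M = Real.exp L + 1) :
    Real.exp (M*p) - Real.exp (L*p) ≤
      p * (Real.exp (L*((p-1)/2)) * Real.exp (M*((p-1)/2))) := by
  have h := sinh_mul_le' p ((M-L)/2) hp0 hp1 (by linarith)
  rw [Real.sinh_eq, Real.sinh_eq] at h
  have h2 : Real.exp (p*(L+M)/2) * Real.exp (p*((M-L)/2))
      - Real.exp (p*(L+M)/2) * Real.exp (-(p*((M-L)/2)))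
      ≤ p * (Real.exp (p*(L+M)/2) * Real.exp ((M-L)/2))
      - p * (Real.exp (p*(L+M)/2) * Real.exp (-((M-L)/2))) := by
    have h2' := mul_le_mul_of_nonneg_left h (Real.exp_pos (p*(L+M)/2)).le
    nlinarith [h2']
  have e1 : Real.exp (p*(L+M)/2) * Real.exp (p*((M-L)/2)) = Real.exp (M*p) := by
    rw [← Real.exp_add]; congr 1; ring
  have e2 : Real.exp (p*(L+M)/2) * Real.exp (-(p*((M-L)/2))) = Real.exp (L*p) := by
    rw [← Real.exp_add]; congr 1; ring
  have e3 : Real.exp (p*(L+M)/2) * Real.exp ((M-L)/2)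
      = Real.exp (L*((p-1)/2)) * Real.exp (M*((p-1)/2)) * Real.exp M := by
    rw [← Real.exp_add, ← Real.exp_add, ← Real.exp_add]; congr 1; ring
  have e4 : Real.exp (p*(L+M)/2) * Real.exp (-((M-L)/2))
      = Real.exp (L*((p-1)/2)) * Real.exp (M*((p-1)/2)) * Real.exp L := by
    rw [← Real.exp_add, ← Real.exp_add, ← Real.exp_add]; congr 1; ring
  rw [e1, e2, e3, e4, h1] at h2
  nlinarith [h2]

private lemma keyK' (p y : ℝ) (hp0 : 0 < p) (hp1 : p ≤ 1) (hy : 0 < y) :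
    (y+1)^p - y^p ≤ p * (y^((p-1)/2) * ((y+1)^((p-1)/2))) := by
  have hy1 : (0:ℝ) < y + 1 := by linarith
  have hLM : Real.log y ≤ Real.log (y+1) := Real.log_le_log hy (by linarith)
  have h1 : Real.exp (Real.log (y+1)) = Real.exp (Real.log y) + 1 := by
    rw [Real.exp_log hy, Real.exp_log hy1]
  have h := exp_core' p (Real.log y) (Real.log (y+1)) hp0.le hp1 hLM h1
  rw [Real.rpow_def_of_pos hy, Real.rpow_def_of_pos hy1,
      Real.rpow_def_of_pos hy, Real.rpow_def_of_pos hy1]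
  exact h

private lemma h_mono' (p : ℝ) (hp0 : 0 < p) (hp1 : p ≤ 1) :
    MonotoneOn (fun y : ℝ => y^p/((y+1)^p - y^p) - y/p) (Ici 1) := by
  have hderivAt : ∀ z : ℝ, 0 < z →
      HasDerivAt (fun y : ℝ => y^p/((y+1)^p - y^p) - y/p)
      ((p * z^(p-1) * ((z+1)^p - z^p) - z^p * (p*(z+1)^(p-1)*1 - p*z^(p-1))) / ((z+1)^p - z^p)^2
        - 1/p) z := by
    intro z hz
    have hz1 : (0:ℝ) < z + 1 := by linarith
    have hD : (0:ℝ) < (z+1)^p - z^p := by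
      have := Real.rpow_lt_rpow hz.le (by linarith : z < z + 1) hp0
      linarith
    have d1 : HasDerivAt (fun y : ℝ => y^p) (p * z^(p-1)) z :=
      Real.hasDerivAt_rpow_const (Or.inl (ne_of_gt hz))
    have d2 : HasDerivAt (fun y : ℝ => (y+1)^p) (p * (z+1)^(p-1) * 1) z := by
      have := (Real.hasDerivAt_rpow_const (x := z+1) (p := p) (Or.inl (ne_of_gt hz1))).comp z
        ((hasDerivAt_id z).add_const 1)
      exact this
    exact (d1.div (d2.sub d1) (ne_of_gt hD)).sub ((hasDerivAt_id z).div_const p)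
  have hdiff : DifferentiableOn ℝ (fun y : ℝ => y^p/((y+1)^p - y^p) - y/p) (Ici 1) := by
    intro z hz
    exact ((hderivAt z (lt_of_lt_of_le one_pos hz)).differentiableAt).differentiableWithinAt
  apply monotoneOn_of_deriv_nonneg (convex_Ici 1) hdiff.continuousOn
  · rw [interior_Ici]
    intro z hz
    exact ((hderivAt z (lt_trans one_pos hz)).differentiableAt).differentiableWithinAt
  · rw [interior_Ici]
    intro z hz
    have hz0 : (0:ℝ) < z := lt_trans one_pos hz
    have hz1 : (0:ℝ) < z + 1 := by linarith
    rw [(hderivAt z hz0).deriv]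
    have hD : (0:ℝ) < (z+1)^p - z^p := by
      have := Real.rpow_lt_rpow hz0.le (by linarith : z < z + 1) hp0
      linarith
    have e1 : z^p = z^(p-1) * z := by
      rw [← Real.rpow_add_one (ne_of_gt hz0)]; ring_nf
    have e2 : (z+1)^p = (z+1)^(p-1) * (z+1) := by
      rw [← Real.rpow_add_one (ne_of_gt hz1)]; ring_nf
    have hnum : p * z^(p-1) * ((z+1)^p - z^p) - z^p * (p*(z+1)^(p-1)*1 - p*z^(p-1))
        = p * (z^(p-1) * (z+1)^(p-1)) := by
      rw [e1, e2]; ring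
    rw [hnum]
    have hK := keyK' p z hp0 hp1 hz0
    have hsq : (z^((p-1)/2))*(z^((p-1)/2)) = z^(p-1) := by
      rw [← Real.rpow_add hz0]; ring_nf
    have hsq1 : ((z+1)^((p-1)/2))*((z+1)^((p-1)/2)) = (z+1)^(p-1) := by
      rw [← Real.rpow_add hz1]; ring_nf
    have hD2 : ((z+1)^p - z^p)^2 ≤ p^2 * (z^(p-1) * (z+1)^(p-1)) := by
      have h2 := mul_le_mul hK hK hD.le (by positivity)
      calc ((z+1)^p - z^p)^2 = ((z+1)^p - z^p) * ((z+1)^p - z^p) := by ring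
        _ ≤ (p * (z^((p-1)/2) * ((z+1)^((p-1)/2)))) * (p * (z^((p-1)/2) * ((z+1)^((p-1)/2)))) := h2
        _ = p^2 * ((z^((p-1)/2))*(z^((p-1)/2)) * (((z+1)^((p-1)/2))*((z+1)^((p-1)/2)))) := by ring
        _ = p^2 * (z^(p-1) * (z+1)^(p-1)) := by rw [hsq, hsq1]
    have hstep : 1/p ≤ p * (z^(p-1) * (z+1)^(p-1)) / ((z+1)^p - z^p)^2 := by
      rw [div_le_div_iff₀ hp0 (by positivity)]
      nlinarith [hD2]
    linarith

private lemma S_bound' (p : ℝ) (hp0 : 0 < p) (hp1 : p ≤ 1) :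
    ∀ q : ℕ, 1 ≤ q →
      (∑ i ∈ Finset.Icc 1 q, (i : ℝ) ^ p) * ((p+1) * (((q:ℝ)+1)^p - (q:ℝ)^p))
        ≤ p * (q:ℝ)^p * ((q:ℝ)+1)^p := by
  intro q hq
  induction q, hq using Nat.le_induction with
  | base =>
    simp only [Finset.Icc_self, Finset.sum_singleton, Nat.cast_one]
    rw [Real.one_rpow]
    have hK := keyK' p 1 hp0 hp1 one_pos
    rw [Real.one_rpow, Real.one_rpow, one_mul] at hK
    have h2 : ((1:ℝ)+1)^((p-1)/2) ≤ 1 :=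
      Real.rpow_le_one_of_one_le_of_nonpos (by norm_num) (by linarith)
    have h4 : p * (((1:ℝ)+1)^((p-1)/2)) ≤ p * 1 := mul_le_mul_of_nonneg_left h2 hp0.le
    have h3 : ((1:ℝ)+1)^p ≤ p + 1 := by
      set X := ((1:ℝ) + 1) ^ ((p - 1) / 2) with hX
      set Y := ((1:ℝ) + 1) ^ p with hY
      linarith
    set Y := ((1:ℝ) + 1) ^ p with hY
    nlinarith [h3]
  | succ q hq1 ih =>
    have hu1 : (1:ℝ) ≤ (q:ℝ) := by exact_mod_cast hq1
    have hu0 : (0:ℝ) < (q:ℝ) := by linarith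
    set u : ℝ := (q:ℝ) with hu
    have hD : (0:ℝ) < (u+1)^p - u^p := by
      have := Real.rpow_lt_rpow hu0.le (by linarith : u < u + 1) hp0
      linarith
    have hD' : (0:ℝ) < (u+1+1)^p - (u+1)^p := by
      have := Real.rpow_lt_rpow (by linarith : (0:ℝ) ≤ u+1) (by linarith : u+1 < u+1+1) hp0
      linarith
    have hY : (0:ℝ) < (u+1)^p := Real.rpow_pos_of_pos (by linarith) p
    -- step from monotonicity
    have hmono := h_mono' p hp0 hp1 (mem_Ici.mpr hu1) (mem_Ici.mpr (by linarith : (1:ℝ) ≤ u+1))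
      (by linarith : u ≤ u + 1)
    simp only at hmono
    have hstep' : u^p/((u+1)^p - u^p) + 1/p ≤ (u+1)^p/((u+1+1)^p - (u+1)^p) := by
      have : (u+1)/p = u/p + 1/p := by ring
      rw [this] at hmono
      linarith
    have e1 : u^p/((u+1)^p - u^p) + 1/p
        = (p * u^p + ((u+1)^p - u^p))/(p * ((u+1)^p - u^p)) := by
      field_simp
    rw [e1, div_le_div_iff₀ (by positivity) hD'] at hstep'
    -- cast for q+1
    have hc1 : ((q+1:ℕ):ℝ) = u + 1 := by push_cast; ring
    rw [Finset.sum_Icc_succ_top (by omega : 1 ≤ q + 1), hc1]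
    set Sq : ℝ := ∑ i ∈ Finset.Icc 1 q, (i : ℝ) ^ p with hSq
    -- goal : (Sq + (u+1)^p) * ((p+1) * ((u+1+1)^p - (u+1)^p)) ≤ p * (u+1)^p * (u+1+1)^p
    nlinarith [mul_le_mul_of_nonneg_right ih hD'.le,
      mul_le_mul_of_nonneg_left hstep' hY.le, mul_pos hD hD',
      mul_pos (mul_pos hp0 hY) hD, mul_pos hY hD']


private lemma tele' (g : ℕ → ℝ) (a t : ℕ) (h : a ≤ t) :
    ∑ q ∈ Finset.Ico a t, (g q - g (q+1)) = g a - g t := by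
  rw [Finset.sum_Ico_eq_sum_range]
  have h2 := Finset.sum_range_sub' (fun i => g (a+i)) (t-a)
  simp only [Nat.add_zero] at h2
  rw [show a + (t - a) = t from by omega] at h2
  rw [← h2]
  apply Finset.sum_congr rfl
  intro i _
  rfl



/-- Telescoping bound on partial kernel sums: for integers `c ≥ 3`, `p = 2/(c−1)`,
and integers `1 ≤ a ≤ t`, `(2c/(c+1)) · a^p · ∑_{q=a}^{t−1} 1/S_p(q) ≥ c·(1 − (a/t)^p)`. -/
theorem stmt_9 (c : ℕ) (hc : 3 ≤ c) (p : ℝ) (hp : p = 2 / ((c : ℝ) - 1))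
    (a t : ℕ) (ha : 1 ≤ a) (hat : a ≤ t)
    (S : ℕ → ℝ) (hS : ∀ n : ℕ, S n = ∑ i ∈ Finset.Icc 1 n, (i : ℝ) ^ p) :
    (c : ℝ) * (1 - ((a : ℝ) / (t : ℝ)) ^ p) ≤
      (2 * (c : ℝ) / ((c : ℝ) + 1)) * (a : ℝ) ^ p * ∑ q ∈ Finset.Ico a t, 1 / S q := by
  have hc3 : (3:ℝ) ≤ (c:ℝ) := by exact_mod_cast hc
  have hcm1 : (0:ℝ) < (c:ℝ) - 1 := by linarith
  have hp0 : 0 < p := by rw [hp]; positivity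
  have hp1 : p ≤ 1 := by rw [hp, div_le_one hcm1]; linarith
  have ha0 : (0:ℝ) < (a:ℝ) := by exact_mod_cast (by omega : 0 < a)
  have ht0 : (0:ℝ) < (t:ℝ) := by exact_mod_cast (by omega : 0 < t)
  -- per-term bound
  have hterm : ∀ q : ℕ, 1 ≤ q →
      ((p+1)/p) * ((q:ℝ)^(-p) - ((q:ℝ)+1)^(-p)) ≤ 1 / S q := by
    intro q hq
    have hu1 : (1:ℝ) ≤ (q:ℝ) := by exact_mod_cast hq
    have hu0 : (0:ℝ) < (q:ℝ) := by linarith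
    have hX : (0:ℝ) < (q:ℝ)^p := Real.rpow_pos_of_pos hu0 p
    have hY : (0:ℝ) < ((q:ℝ)+1)^p := Real.rpow_pos_of_pos (by linarith) p
    have hD : (0:ℝ) < ((q:ℝ)+1)^p - (q:ℝ)^p := by
      have := Real.rpow_lt_rpow hu0.le (by linarith : (q:ℝ) < (q:ℝ) + 1) hp0
      linarith
    have hSpos : 0 < S q := by
      rw [hS q]
      apply Finset.sum_pos
      · intro i hi
        have hi1 : 1 ≤ i := (Finset.mem_Icc.mp hi).1
        exact Real.rpow_pos_of_pos (by exact_mod_cast hi1 : (0:ℝ) < (i:ℝ)) p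
      · exact ⟨1, Finset.mem_Icc.mpr ⟨le_refl 1, hq⟩⟩
    have hb := S_bound' p hp0 hp1 q hq
    rw [← hS q] at hb
    have hle : S q ≤ p * (q:ℝ)^p * ((q:ℝ)+1)^p / ((p+1) * (((q:ℝ)+1)^p - (q:ℝ)^p)) := by
      rw [le_div_iff₀ (by positivity)]
      exact hb
    have h5 := one_div_le_one_div_of_le hSpos hle
    rw [one_div_div] at h5
    have e7 : ((p+1)/p) * ((q:ℝ)^(-p) - ((q:ℝ)+1)^(-p))
        = (p+1) * (((q:ℝ)+1)^p - (q:ℝ)^p) / (p * (q:ℝ)^p * ((q:ℝ)+1)^p) := by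
      rw [Real.rpow_neg hu0.le, Real.rpow_neg (by linarith : (0:ℝ) ≤ (q:ℝ)+1)]
      field_simp
    rw [e7]
    exact h5
  -- sum bound
  have hsum : ∑ q ∈ Finset.Ico a t, ((p+1)/p) * ((q:ℝ)^(-p) - ((q:ℝ)+1)^(-p))
      ≤ ∑ q ∈ Finset.Ico a t, 1 / S q := by
    apply Finset.sum_le_sum
    intro q hq
    exact hterm q (le_trans ha (Finset.mem_Ico.mp hq).1)
  have htel : ∑ q ∈ Finset.Ico a t, ((p+1)/p) * ((q:ℝ)^(-p) - ((q:ℝ)+1)^(-p))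
      = ((p+1)/p) * ((a:ℝ)^(-p) - (t:ℝ)^(-p)) := by
    rw [← Finset.mul_sum]
    congr 1
    have := tele' (fun n : ℕ => (n:ℝ)^(-p)) a t hat
    rw [← this]
    apply Finset.sum_congr rfl
    intro q _
    congr 2
    push_cast
    ring
  have hSig : ((p+1)/p) * ((a:ℝ)^(-p) - (t:ℝ)^(-p)) ≤ ∑ q ∈ Finset.Ico a t, 1 / S q := by
    rw [← htel]; exact hsum
  have hXa : (a:ℝ)^p ≠ 0 := ne_of_gt (Real.rpow_pos_of_pos ha0 p)
  have hXt : (t:ℝ)^p ≠ 0 := ne_of_gt (Real.rpow_pos_of_pos ht0 p)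
  have e5 : (a:ℝ)^p * ((a:ℝ)^(-p) - (t:ℝ)^(-p)) = 1 - ((a:ℝ)/(t:ℝ))^p := by
    rw [Real.rpow_neg ha0.le, Real.rpow_neg ht0.le, Real.div_rpow ha0.le ht0.le]
    field_simp
  have e6 : 2*(c:ℝ)/((c:ℝ)+1) * ((p+1)/p) = (c:ℝ) := by
    rw [hp]
    have h1 : (c:ℝ)+1 ≠ 0 := by linarith
    have h2 : (c:ℝ)-1 ≠ 0 := ne_of_gt hcm1
    field_simp
    ring
  calc (c:ℝ) * (1 - ((a:ℝ)/(t:ℝ))^p)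
      = 2*(c:ℝ)/((c:ℝ)+1) * ((p+1)/p) * ((a:ℝ)^p * ((a:ℝ)^(-p) - (t:ℝ)^(-p))) := by
        rw [e5, e6]
    _ = (2*(c:ℝ)/((c:ℝ)+1)) * (a:ℝ)^p * (((p+1)/p) * ((a:ℝ)^(-p) - (t:ℝ)^(-p))) := by ring
    _ ≤ (2*(c:ℝ)/((c:ℝ)+1)) * (a:ℝ)^p * ∑ q ∈ Finset.Ico a t, 1 / S q := by
        apply mul_le_mul_of_nonneg_left hSig
        positivity
end

section
/- Let G = (V,E) be a finite connected simple graph and let T ⊆ E be the edge set of a spanning tree of G. Let s_e, s_f ∈ E∖T be distinct non-tree edges and let e, f ∈ T be distinct tree edges such that both (T∖{e}) ∪ {s_e} and (T∖{f}) ∪ {s_f} are edge sets of spanning trees of G. If the spanning subgraph of G with edge set (T∖{e}) ∪ {s_f} is disconnected, or the spanning subgraph with edge set (T∖{f}) ∪ {s_e} is disconnected, then the spanning subgraph with edge set (T∖{e,f}) ∪ {s_e, s_f} is connected (and hence is a spanning tree of G). -/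
open SimpleGraph

private lemma reach_mono' {V : Type} {s t : Set (Sym2 V)} (h : s ⊆ t) {a b : V}
    (hr : (SimpleGraph.fromEdgeSet s).Reachable a b) :
    (SimpleGraph.fromEdgeSet t).Reachable a b :=
  hr.mono (SimpleGraph.fromEdgeSet_mono h)

/-- Decomposition of reachability after adding one edge. -/
private lemma decomp' {V : Type} {D : Set (Sym2 V)} {c d a b : V}
    (h : (SimpleGraph.fromEdgeSet (D ∪ {s(c,d)})).Reachable a b) :
    (SimpleGraph.fromEdgeSet D).Reachable a b ∨
    ((SimpleGraph.fromEdgeSet D).Reachable a c ∧ (SimpleGraph.fromEdgeSet D).Reachable d b) ∨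
    ((SimpleGraph.fromEdgeSet D).Reachable a d ∧ (SimpleGraph.fromEdgeSet D).Reachable c b) := by
  obtain ⟨W⟩ := h
  induction W with
  | nil => exact Or.inl (Reachable.refl _)
  | @cons u v _ h p ih =>
    rw [fromEdgeSet_adj] at h
    rcases h.1 with hD | hcd
    · have hadj : (SimpleGraph.fromEdgeSet D).Adj u v := (fromEdgeSet_adj _).mpr ⟨hD, h.2⟩
      rcases ih with h' | ⟨h1, h2⟩ | ⟨h1, h2⟩
      · exact Or.inl (hadj.reachable.trans h')
      · exact Or.inr (Or.inl ⟨hadj.reachable.trans h1, h2⟩)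
      · exact Or.inr (Or.inr ⟨hadj.reachable.trans h1, h2⟩)
    · simp only [Set.mem_singleton_iff] at hcd
      rcases Sym2.eq_iff.mp hcd with ⟨rfl, rfl⟩ | ⟨rfl, rfl⟩
      · rcases ih with h' | ⟨h1, h2⟩ | ⟨h1, h2⟩
        · exact Or.inr (Or.inl ⟨Reachable.refl _, h'⟩)
        · exact Or.inl (h1.symm.trans h2)
        · exact Or.inl h2
      · rcases ih with h' | ⟨h1, h2⟩ | ⟨h1, h2⟩
        · exact Or.inr (Or.inr ⟨Reachable.refl _, h'⟩)
        · exact Or.inl h2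
        · exact Or.inl (h1.symm.trans h2)

/-- In a connected `fromEdgeSet S`, after deleting the single edge `s(x,y)`,
every vertex can still reach `x` or `y`. -/
private lemma cov' {V : Type} {S : Set (Sym2 V)} (hc : (SimpleGraph.fromEdgeSet S).Connected)
    (x y w : V) :
    (SimpleGraph.fromEdgeSet (S \ {s(x,y)})).Reachable w x ∨
    (SimpleGraph.fromEdgeSet (S \ {s(x,y)})).Reachable w y := by
  have hr : (SimpleGraph.fromEdgeSet ((S \ {s(x,y)}) ∪ {s(x,y)})).Reachable w x := by
    refine Reachable.mono (fromEdgeSet_mono ?_) (hc.preconnected w x)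
    intro z hz
    by_cases hzz : z = s(x, y) <;> simp [hzz, hz]
  rcases decomp' hr with h | ⟨h1, h2⟩ | ⟨h1, h2⟩
  · exact Or.inl h
  · exact Or.inl h1
  · exact Or.inr h1

/-- If every vertex reaches `x` or `y` in `fromEdgeSet D`, and `a`, `b` are not
`D`-reachable from each other, then adding the edge `a-b` makes the graph connected. -/
private lemma connect' {V : Type} [Nonempty V] {D : Set (Sym2 V)} {x y a b : V} (hab : a ≠ b)
    (hcov : ∀ w, (SimpleGraph.fromEdgeSet D).Reachable w x ∨
      (SimpleGraph.fromEdgeSet D).Reachable w y)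
    (hnr : ¬ (SimpleGraph.fromEdgeSet D).Reachable a b) :
    (SimpleGraph.fromEdgeSet (D ∪ {s(a,b)})).Connected := by
  have hmono : ∀ {u v : V}, (SimpleGraph.fromEdgeSet D).Reachable u v →
      (SimpleGraph.fromEdgeSet (D ∪ {s(a,b)})).Reachable u v :=
    fun h => reach_mono' Set.subset_union_left h
  have hadj : (SimpleGraph.fromEdgeSet (D ∪ {s(a,b)})).Adj a b := by
    rw [fromEdgeSet_adj]
    exact ⟨Or.inr rfl, hab⟩
  have hxy : (SimpleGraph.fromEdgeSet (D ∪ {s(a,b)})).Reachable x y := by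
    rcases hcov a with ha | ha <;> rcases hcov b with hb | hb
    · exact absurd (ha.trans hb.symm) hnr
    · exact (hmono ha.symm).trans (hadj.reachable.trans (hmono hb))
    · exact (hmono hb.symm).trans (hadj.symm.reachable.trans (hmono ha))
    · exact absurd (ha.trans hb.symm) hnr
  constructor
  intro u v
  rcases hcov u with hu | hu <;> rcases hcov v with hv | hv
  · exact (hmono hu).trans (hmono hv.symm)
  · exact (hmono hu).trans (hxy.trans (hmono hv.symm))
  · exact (hmono hu).trans (hxy.symm.trans (hmono hv.symm))
  · exact (hmono hu).trans (hmono hv.symm)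

/-- Core asymmetric version of the exchange lemma. -/
private lemma core' {V : Type} (G : SimpleGraph V) (hG : G.Connected)
    (T : Set (Sym2 V)) (hT : T ⊆ G.edgeSet)
    (hTree : (SimpleGraph.fromEdgeSet T).IsTree)
    (se sf : Sym2 V) (hse : se ∈ G.edgeSet \ T) (hsf : sf ∈ G.edgeSet \ T)
    (e f : Sym2 V) (he : e ∈ T) (hf : f ∈ T) (hef : e ≠ f)
    (h1 : (SimpleGraph.fromEdgeSet ((T \ {e}) ∪ {se})).IsTree)
    (h2 : (SimpleGraph.fromEdgeSet ((T \ {f}) ∪ {sf})).IsTree)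
    (hdis : ¬ (SimpleGraph.fromEdgeSet ((T \ {e}) ∪ {sf})).Connected) :
    (SimpleGraph.fromEdgeSet ((T \ {e, f}) ∪ {se, sf})).Connected := by
  have : Nonempty V := hG.nonempty
  obtain ⟨p, q, rfl⟩ := Sym2.inductionOn (f := fun z => ∃ p q, z = s(p,q)) e
    (fun p q => ⟨p, q, rfl⟩)
  obtain ⟨x, y, rfl⟩ := Sym2.inductionOn (f := fun z => ∃ p q, z = s(p,q)) f
    (fun p q => ⟨p, q, rfl⟩)
  obtain ⟨c, d, rfl⟩ := Sym2.inductionOn (f := fun z => ∃ p q, z = s(p,q)) se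
    (fun p q => ⟨p, q, rfl⟩)
  obtain ⟨a, b, rfl⟩ := Sym2.inductionOn (f := fun z => ∃ p q, z = s(p,q)) sf
    (fun p q => ⟨p, q, rfl⟩)
  have hadjPQ : G.Adj p q := hT he
  have hadjXY : G.Adj x y := hT hf
  have hadjCD : G.Adj c d := hse.1
  have hadjAB : G.Adj a b := hsf.1
  have hpq := hadjPQ.ne
  have hxy' := hadjXY.ne
  have hcd := hadjCD.ne
  have hab := hadjAB.ne
  set D0 : Set (Sym2 V) := T \ {s(p,q), s(x,y)} with hD0
  -- set equalities
  have hTe : T \ {s(p,q)} = D0 ∪ {s(x,y)} := by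
    ext z
    simp only [hD0, Set.mem_diff, Set.mem_union, Set.mem_singleton_iff, Set.mem_insert_iff]
    constructor
    · rintro ⟨hz, hz2⟩
      by_cases hzf : z = s(x, y)
      · exact Or.inr hzf
      · exact Or.inl ⟨hz, by tauto⟩
    · rintro (⟨hz, hz2⟩ | rfl)
      · exact ⟨hz, by tauto⟩
      · exact ⟨hf, fun h => hef h.symm⟩
  have hTf : T \ {s(x,y)} = D0 ∪ {s(p,q)} := by
    ext z
    simp only [hD0, Set.mem_diff, Set.mem_union, Set.mem_singleton_iff, Set.mem_insert_iff]
    constructor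
    · rintro ⟨hz, hz2⟩
      by_cases hze : z = s(p, q)
      · exact Or.inr hze
      · exact Or.inl ⟨hz, by tauto⟩
    · rintro (⟨hz, hz2⟩ | rfl)
      · exact ⟨hz, by tauto⟩
      · exact ⟨he, hef⟩
  have hG1f : ((T \ {s(p,q)}) ∪ {s(c,d)}) \ {s(x,y)} = D0 ∪ {s(c,d)} := by
    ext z
    simp only [hD0, Set.mem_diff, Set.mem_union, Set.mem_singleton_iff, Set.mem_insert_iff]
    constructor
    · rintro ⟨⟨hz, hz2⟩ | rfl, hz3⟩
      · exact Or.inl ⟨hz, by tauto⟩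
      · exact Or.inr rfl
    · rintro (⟨hz, hz2⟩ | rfl)
      · exact ⟨Or.inl ⟨hz, by tauto⟩, by tauto⟩
      · exact ⟨Or.inr rfl, fun h => hse.2 (h ▸ hf)⟩
  -- sf does not reconnect after removing f (it is a bridge of the tree h2)
  have hA : ¬ (SimpleGraph.fromEdgeSet (T \ {s(x,y)})).Reachable a b := by
    have hG2adj : (SimpleGraph.fromEdgeSet ((T \ {s(x,y)}) ∪ {s(a,b)})).Adj a b :=
      (fromEdgeSet_adj _).mpr ⟨Or.inr rfl, hab⟩
    have hbridge := (isAcyclic_iff_forall_adj_isBridge.mp h2.IsAcyclic) hG2adj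
    rw [isBridge_iff] at hbridge
    intro hr
    refine hbridge (hr.mono ?_)
    intro u v huv
    rw [fromEdgeSet_adj] at huv
    rw [deleteEdges, sdiff_adj]
    refine ⟨(fromEdgeSet_adj _).mpr ⟨Or.inl huv.1, huv.2⟩, ?_⟩
    intro hadj2
    rw [fromEdgeSet_adj, Set.mem_singleton_iff] at hadj2
    exact hsf.2 (hadj2.1 ▸ huv.1.1)
  -- se does not reconnect after removing e (it is a bridge of the tree h1)
  have hB : ¬ (SimpleGraph.fromEdgeSet (T \ {s(p,q)})).Reachable c d := by
    have hG1adj : (SimpleGraph.fromEdgeSet ((T \ {s(p,q)}) ∪ {s(c,d)})).Adj c d :=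
      (fromEdgeSet_adj _).mpr ⟨Or.inr rfl, hcd⟩
    have hbridge := (isAcyclic_iff_forall_adj_isBridge.mp h1.IsAcyclic) hG1adj
    rw [isBridge_iff] at hbridge
    intro hr
    refine hbridge (hr.mono ?_)
    intro u v huv
    rw [fromEdgeSet_adj] at huv
    rw [deleteEdges, sdiff_adj]
    refine ⟨(fromEdgeSet_adj _).mpr ⟨Or.inl huv.1, huv.2⟩, ?_⟩
    intro hadj2
    rw [fromEdgeSet_adj, Set.mem_singleton_iff] at hadj2
    exact hse.2 (hadj2.1 ▸ huv.1.1)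
  -- from the disconnection hypothesis: a and b are still reachable after removing e
  have hreach_ab_Te : (SimpleGraph.fromEdgeSet (T \ {s(p,q)})).Reachable a b := by
    by_contra hn
    exact hdis (connect' hab (fun w => cov' hTree.isConnected p q w) hn)
  have hsubA : D0 ⊆ T \ {s(x,y)} := by
    intro z hz
    exact ⟨hz.1, fun h => hz.2 (by simp [Set.mem_singleton_iff.mp h])⟩
  have hnab0 : ¬ (SimpleGraph.fromEdgeSet D0).Reachable a b :=
    fun h => hA (reach_mono' hsubA h)
  -- decompose the reachability of a,b in T − e through the edge f = s(x,y)
  rw [hTe] at hreach_ab_Te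
  have hdec := decomp' hreach_ab_Te
  have hB' : ¬ (SimpleGraph.fromEdgeSet (D0 ∪ {s(x,y)})).Reachable c d := hTe ▸ hB
  have hxyadj : (SimpleGraph.fromEdgeSet (D0 ∪ {s(x,y)})).Adj x y :=
    (fromEdgeSet_adj _).mpr ⟨Or.inr rfl, hxy'⟩
  have key1 : (SimpleGraph.fromEdgeSet D0).Reachable c x →
      (SimpleGraph.fromEdgeSet D0).Reachable y d → False := fun hcx hyd =>
    hB' (((reach_mono' Set.subset_union_left hcx).trans hxyadj.reachable).trans
      (reach_mono' Set.subset_union_left hyd))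
  have key2 : (SimpleGraph.fromEdgeSet D0).Reachable c y →
      (SimpleGraph.fromEdgeSet D0).Reachable x d → False := fun hcy hxd =>
    hB' (((reach_mono' Set.subset_union_left hcy).trans hxyadj.symm.reachable).trans
      (reach_mono' Set.subset_union_left hxd))
  -- a and b are not reachable in D0 ∪ {se}
  have hnr : ¬ (SimpleGraph.fromEdgeSet (D0 ∪ {s(c,d)})).Reachable a b := by
    intro h
    rcases decomp' h with h0 | ⟨g1, g2⟩ | ⟨g1, g2⟩
    · exact hnab0 h0
    · rcases hdec with h0 | ⟨k1, k2⟩ | ⟨k1, k2⟩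
      · exact hnab0 h0
      · exact key1 (g1.symm.trans k1) (k2.trans g2.symm)
      · exact key2 (g1.symm.trans k1) (k2.trans g2.symm)
    · rcases hdec with h0 | ⟨k1, k2⟩ | ⟨k1, k2⟩
      · exact hnab0 h0
      · exact key2 (g2.trans k2.symm) ((g1.symm.trans k1).symm)
      · exact key1 (g2.trans k2.symm) ((g1.symm.trans k1).symm)
  -- coverage in D0 ∪ {se} from the tree h1
  have hcov : ∀ w, (SimpleGraph.fromEdgeSet (D0 ∪ {s(c,d)})).Reachable w x ∨
      (SimpleGraph.fromEdgeSet (D0 ∪ {s(c,d)})).Reachable w y := by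
    intro w
    have := cov' h1.isConnected x y w
    rwa [hG1f] at this
  have hfin := connect' hab hcov hnr
  have hset : (D0 ∪ {s(c,d)}) ∪ {s(a,b)} = (T \ {s(p,q), s(x,y)}) ∪ {s(c,d), s(a,b)} := by
    rw [Set.union_assoc, Set.singleton_union]
  rwa [hset] at hfin

/-- Exchange lemma: if `T − e + s_e` and `T − f + s_f` are spanning trees, and
`T − e + s_f` is disconnected or `T − f + s_e` is disconnected, then
`T − e − f + s_e + s_f` is connected. -/
theorem stmt_13 {V : Type} [Finite V] (G : SimpleGraph V) (hG : G.Connected)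
    (T : Set (Sym2 V)) (hT : T ⊆ G.edgeSet)
    (hTree : (SimpleGraph.fromEdgeSet T).IsTree)
    (se sf : Sym2 V) (hse : se ∈ G.edgeSet \ T) (hsf : sf ∈ G.edgeSet \ T)
    (hsesf : se ≠ sf)
    (e f : Sym2 V) (he : e ∈ T) (hf : f ∈ T) (hef : e ≠ f)
    (h1 : (SimpleGraph.fromEdgeSet ((T \ {e}) ∪ {se})).IsTree)
    (h2 : (SimpleGraph.fromEdgeSet ((T \ {f}) ∪ {sf})).IsTree)
    (hdis : ¬ (SimpleGraph.fromEdgeSet ((T \ {e}) ∪ {sf})).Connected ∨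
            ¬ (SimpleGraph.fromEdgeSet ((T \ {f}) ∪ {se})).Connected) :
    (SimpleGraph.fromEdgeSet ((T \ {e, f}) ∪ {se, sf})).Connected := by
  rcases hdis with hd | hd
  · exact core' G hG T hT hTree se sf hse hsf e f he hf hef h1 h2 hd
  · have h := core' G hG T hT hTree sf se hsf hse f e hf he hef.symm h2 h1 hd
    rwa [Set.pair_comm f e, Set.pair_comm sf se] at h
end

section
/- Let G = (V,E) be a finite connected simple graph and let T ⊆ E be the edge set of a spanning tree of G. Let e ∈ T and s_e ∈ E∖T be such that T' = (T∖{e}) ∪ {s_e} is again the edge set of a spanning tree of G. Let f ∈ T with f ≠ e (so f ∈ T ∩ T') and let s ∈ E∖T with s ≠ s_e (so s ∉ T'). Suppose that NOT (s_e covers f with respect to T and s covers e with respect to T), and also NOT (e covers f with respect to T' and s covers s_e with respect to T'). Then s covers f with respect to T if and only if s covers f with respect to T'. -/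
open SimpleGraph

section Helpers

variable {V : Type}

/-- An edge `x` crosses the vertex set `A` if it has one endpoint in `A`
and one endpoint outside `A`. -/
def cross (A : Set V) (x : Sym2 V) : Prop := ∃ u v, x = s(u, v) ∧ u ∈ A ∧ v ∉ A

lemma cross_iff {A : Set V} {a b : V} :
    cross A s(a, b) ↔ (a ∈ A ∧ b ∉ A) ∨ (b ∈ A ∧ a ∉ A) := by
  constructor
  · rintro ⟨u, v, hx, hu, hv⟩
    rw [Sym2.eq_iff] at hx
    rcases hx with ⟨rfl, rfl⟩ | ⟨rfl, rfl⟩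
    · exact Or.inl ⟨hu, hv⟩
    · exact Or.inr ⟨hu, hv⟩
  · rintro (⟨h1, h2⟩ | ⟨h1, h2⟩)
    · exact ⟨a, b, rfl, h1, h2⟩
    · exact ⟨b, a, Sym2.eq_swap.symm, h1, h2⟩

lemma walk_closed {H : SimpleGraph V} {A : Set V}
    (hA : ∀ ⦃a b : V⦄, H.Adj a b → a ∈ A → b ∈ A) :
    ∀ {a w : V}, H.Reachable a w → a ∈ A → w ∈ A := by
  intro a w h ha
  obtain ⟨p⟩ := h
  induction p with
  | nil => exact ha
  | cons h p ih => exact ih (hA h ha)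

lemma reach_split {G H : SimpleGraph V} {u v : V}
    (hH : ∀ ⦃a b : V⦄, G.Adj a b → s(a, b) ≠ s(u, v) → H.Adj a b) :
    ∀ {a w : V}, G.Reachable a w →
      H.Reachable a w ∨ H.Reachable u w ∨ H.Reachable v w := by
  intro a w h
  obtain ⟨p⟩ := h
  induction p with
  | nil => exact Or.inl (Reachable.refl _)
  | @cons a b w hab p ih =>
    by_cases hx : s(a, b) = s(u, v)
    · rw [Sym2.eq_iff] at hx
      rcases ih with hbw | huw | hvw
      · rcases hx with ⟨rfl, rfl⟩ | ⟨rfl, rfl⟩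
        · exact Or.inr (Or.inr hbw)
        · exact Or.inr (Or.inl hbw)
      · exact Or.inr (Or.inl huw)
      · exact Or.inr (Or.inr hvw)
    · rcases ih with hbw | huw | hvw
      · exact Or.inl ((hH hab hx).reachable.trans hbw)
      · exact Or.inr (Or.inl huw)
      · exact Or.inr (Or.inr hvw)

lemma tree_not_reach {R : Set (Sym2 V)} (hR : (fromEdgeSet R).IsTree)
    {a b : V} (hab : a ≠ b) (hg : s(a, b) ∈ R) :
    ¬ (fromEdgeSet (R \ {s(a, b)})).Reachable a b := by
  intro h
  have hbr : (fromEdgeSet R).IsBridge s(a, b) :=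
    (isAcyclic_iff_forall_edge_isBridge.mp hR.IsAcyclic) (by simp [hg, hab])
  rw [isBridge_iff] at hbr
  refine hbr (h.mono ?_)
  intro c d hcd
  simp only [fromEdgeSet_adj, Set.mem_diff, Set.mem_singleton_iff] at hcd
  simp only [deleteEdges_adj, fromEdgeSet_adj, Set.mem_singleton_iff]
  exact ⟨⟨hcd.1.1, hcd.2⟩, hcd.1.2⟩

end Helpers

/-- A non-tree edge `s` covers a tree edge `g` with respect to the spanning tree edge
set `R` if the spanning subgraph with edge set `(R ∖ {g}) ∪ {s}` is connected
(equivalently, is again a spanning tree). -/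
def covers {V : Type} (R : Set (Sym2 V)) (s g : Sym2 V) : Prop :=
  (SimpleGraph.fromEdgeSet ((R \ {g}) ∪ {s})).Connected

section Covers

variable {V : Type}

lemma covers_iff_cross {R : Set (Sym2 V)} (hR : (fromEdgeSet R).IsTree)
    {a b : V} (hab : a ≠ b) (hg : s(a, b) ∈ R) (x : Sym2 V) :
    covers R x s(a, b) ↔
      cross {w | (fromEdgeSet (R \ {s(a, b)})).Reachable a w} x := by
  set A : Set V := {w | (fromEdgeSet (R \ {s(a, b)})).Reachable a w} with hA
  have hmonoD : fromEdgeSet (R \ {s(a, b)}) ≤ fromEdgeSet ((R \ {s(a, b)}) ∪ {x}) :=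
    fromEdgeSet_mono Set.subset_union_left
  have hsplit : ∀ w : V, (fromEdgeSet (R \ {s(a, b)})).Reachable a w ∨
      (fromEdgeSet (R \ {s(a, b)})).Reachable b w := by
    intro w
    have hr : (fromEdgeSet R).Reachable a w := hR.isConnected.preconnected a w
    have := reach_split (G := fromEdgeSet R) (H := fromEdgeSet (R \ {s(a, b)}))
      (u := a) (v := b) ?_ hr
    · tauto
    · intro c d hcd hne
      simp only [fromEdgeSet_adj] at hcd ⊢
      exact ⟨⟨hcd.1, hne⟩, hcd.2⟩
  constructor
  · intro hcov
    by_contra hnc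
    have hclosed : ∀ ⦃c d : V⦄, (fromEdgeSet ((R \ {s(a, b)}) ∪ {x})).Adj c d →
        c ∈ A → d ∈ A := by
      intro c d hcd hc
      rw [fromEdgeSet_adj] at hcd
      rcases hcd.1 with hm | hm
      · exact hc.trans (((fromEdgeSet_adj _).mpr ⟨hm, hcd.2⟩).reachable)
      · simp only [Set.mem_singleton_iff] at hm
        by_contra hd
        exact hnc ⟨c, d, hm.symm, hc, hd⟩
    have hbA : b ∈ A :=
      walk_closed hclosed (hcov.preconnected a b) (Reachable.refl a)
    exact tree_not_reach hR hab hg hbA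
  · rintro ⟨c, d, rfl, hc, hd⟩
    have hne : c ≠ d := fun h => hd (h ▸ hc)
    have hcd : (fromEdgeSet ((R \ {s(a, b)}) ∪ {s(c, d)})).Adj c d :=
      (fromEdgeSet_adj _).mpr ⟨Or.inr rfl, hne⟩
    have hdb : (fromEdgeSet (R \ {s(a, b)})).Reachable b d := by
      rcases hsplit d with h | h
      · exact absurd h hd
      · exact h
    have hab' : (fromEdgeSet ((R \ {s(a, b)}) ∪ {s(c, d)})).Reachable a b :=
      ((hc.mono hmonoD).trans (hcd.reachable.trans (hdb.symm.mono hmonoD)))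
    have hall : ∀ w : V, (fromEdgeSet ((R \ {s(a, b)}) ∪ {s(c, d)})).Reachable a w := by
      intro w
      rcases hsplit w with h | h
      · exact h.mono hmonoD
      · exact hab'.trans (h.mono hmonoD)
    haveI : Nonempty V := hR.isConnected.nonempty
    exact ⟨fun w w' => (hall w).symm.trans (hall w')⟩

end Covers

/-- A branch exchange replacing tree edge `e` by non-tree edge `s_e` changes the
covering relation only on the excluded pairs `(f, s)`: if neither
(`s_e` covers `f` w.r.t. `T` and `s` covers `e` w.r.t. `T`) nor
(`e` covers `f` w.r.t. `T'` and `s` covers `s_e` w.r.t. `T'`), then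
`s` covers `f` w.r.t. `T` iff `s` covers `f` w.r.t. `T' = (T∖{e}) ∪ {s_e}`. -/
theorem stmt_14 {V : Type} [Finite V] (G : SimpleGraph V) (hG : G.Connected)
    (T : Set (Sym2 V)) (hT : T ⊆ G.edgeSet)
    (hTree : (SimpleGraph.fromEdgeSet T).IsTree)
    (e : Sym2 V) (he : e ∈ T) (se : Sym2 V) (hse : se ∈ G.edgeSet \ T)
    (T' : Set (Sym2 V)) (hT' : T' = (T \ {e}) ∪ {se})
    (hTree' : (SimpleGraph.fromEdgeSet T').IsTree)
    (f : Sym2 V) (hf : f ∈ T) (hfe : f ≠ e)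
    (s : Sym2 V) (hs : s ∈ G.edgeSet \ T) (hsse : s ≠ se)
    (hnot1 : ¬ (covers T se f ∧ covers T s e))
    (hnot2 : ¬ (covers T' e f ∧ covers T' s se)) :
    covers T s f ↔ covers T' s f := by
  classical
  obtain ⟨u, v, rfl⟩ : ∃ a b, f = s(a, b) := Sym2.exists.mp ⟨f, rfl⟩
  obtain ⟨p, q, rfl⟩ : ∃ a b, e = s(a, b) := Sym2.exists.mp ⟨e, rfl⟩
  obtain ⟨x1, x2, rfl⟩ : ∃ a b, s = s(a, b) := Sym2.exists.mp ⟨s, rfl⟩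
  have huv : u ≠ v := (G.mem_edgeSet.mp (hT hf)).ne
  have hpq : p ≠ q := (G.mem_edgeSet.mp (hT he)).ne
  have hx12 : x1 ≠ x2 := (G.mem_edgeSet.mp hs.1).ne
  have hfT' : s(u, v) ∈ T' := by
    rw [hT']; exact Or.inl ⟨hf, by simpa using hfe⟩
  -- T' with se removed is T with e removed
  have hsetse : T' \ {se} = T \ {s(p, q)} := by
    rw [hT']
    ext x
    simp only [Set.mem_diff, Set.mem_union, Set.mem_singleton_iff]
    constructor
    · rintro ⟨h1 | rfl, h2⟩
      · exact h1
      · exact absurd rfl h2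
    · intro h
      exact ⟨Or.inl h, fun hx => hse.2 (hx ▸ h.1)⟩
  have hcovse : covers T' s(x1, x2) se = covers T s(x1, x2) s(p, q) := by
    unfold covers
    rw [hsetse]
  -- the cut sets
  set A : Set V := {w | (fromEdgeSet (T \ {s(u, v)})).Reachable u w} with hAdef
  set A' : Set V := {w | (fromEdgeSet (T' \ {s(u, v)})).Reachable u w} with hA'def
  have hcovA : ∀ x, covers T x s(u, v) ↔ cross A x :=
    fun x => covers_iff_cross hTree huv hf x
  have hcovA' : ∀ x, covers T' x s(u, v) ↔ cross A' x :=
    fun x => covers_iff_cross hTree' huv hfT' x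
  have hcovB : ∀ x, covers T x s(p, q) ↔
      cross {w | (fromEdgeSet (T \ {s(p, q)})).Reachable p w} x :=
    fun x => covers_iff_cross hTree hpq he x
  -- the graph with both e and f removed
  set D : SimpleGraph V := fromEdgeSet ((T \ {s(u, v)}) \ {s(p, q)}) with hDdef
  have hDTf : D ≤ fromEdgeSet (T \ {s(u, v)}) := fromEdgeSet_mono Set.diff_subset
  have hDTe : D ≤ fromEdgeSet (T \ {s(p, q)}) :=
    fromEdgeSet_mono (fun x hx => ⟨hx.1.1, hx.2⟩)
  have hDT'f : D ≤ fromEdgeSet (T' \ {s(u, v)}) := by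
    refine fromEdgeSet_mono (fun x hx => ?_)
    rw [hT']
    exact ⟨Or.inl ⟨hx.1.1, hx.2⟩, hx.1.2⟩
  by_cases hP : covers T s(x1, x2) s(p, q)
  · -- Case I : `s` covers `e`, hence neither `se` crosses `A` nor `e` crosses `A'`
    have hX : ¬ cross A se := fun h => hnot1 ⟨(hcovA se).mpr h, hP⟩
    have hY : ¬ cross A' s(p, q) := fun h =>
      hnot2 ⟨(hcovA' _).mpr h, by rw [hcovse]; exact hP⟩
    have hAA' : A = A' := by
      apply Set.Subset.antisymm
      · intro w hw
        refine walk_closed (H := fromEdgeSet (T \ {s(u, v)})) ?_ hw (Reachable.refl u)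
        intro c d hcd hc
        rw [fromEdgeSet_adj] at hcd
        by_cases hce : s(c, d) = s(p, q)
        · by_contra hd
          exact hY ⟨c, d, hce.symm, hc, hd⟩
        · have hm : s(c, d) ∈ T' \ {s(u, v)} := by
            rw [hT']
            exact ⟨Or.inl ⟨hcd.1.1, hce⟩, hcd.1.2⟩
          exact hc.trans (((fromEdgeSet_adj _).mpr ⟨hm, hcd.2⟩).reachable)
      · intro w hw
        refine walk_closed (H := fromEdgeSet (T' \ {s(u, v)})) ?_ hw (Reachable.refl u)
        intro c d hcd hc
        rw [fromEdgeSet_adj] at hcd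
        by_cases hcse : s(c, d) = se
        · by_contra hd
          exact hX ⟨c, d, hcse.symm, hc, hd⟩
        · have hcT : s(c, d) ∈ T := by
            have := hcd.1.1
            rw [hT'] at this
            rcases this with h | h
            · exact h.1
            · exact absurd h hcse
          have hm : s(c, d) ∈ T \ {s(u, v)} := ⟨hcT, hcd.1.2⟩
          exact hc.trans (((fromEdgeSet_adj _).mpr ⟨hm, hcd.2⟩).reachable)
    rw [hcovA, hcovA', hAA']
  · -- Case II : `s` does not cover `e`, so both endpoints of `s` lie on the same
    -- side of the cut induced by `e` in `T`.
    have hnB : ¬ cross {w | (fromEdgeSet (T \ {s(p, q)})).Reachable p w} s(x1, x2) :=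
      fun h => hP ((hcovB _).mpr h)
    have hadjE : ∀ ⦃c d : V⦄, (fromEdgeSet T).Adj c d → s(c, d) ≠ s(p, q) →
        (fromEdgeSet (T \ {s(p, q)})).Adj c d := by
      intro c d hcd hne
      rw [fromEdgeSet_adj] at hcd ⊢
      exact ⟨⟨hcd.1, hne⟩, hcd.2⟩
    have hsplitE : ∀ w : V, (fromEdgeSet (T \ {s(p, q)})).Reachable p w ∨
        (fromEdgeSet (T \ {s(p, q)})).Reachable q w := by
      intro w
      have := reach_split (u := p) (v := q) hadjE (hTree.isConnected.preconnected p w)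
      tauto
    have HS : (fromEdgeSet (T \ {s(p, q)})).Reachable x1 x2 := by
      rw [cross_iff] at hnB
      push_neg at hnB
      simp only [Set.mem_setOf_eq] at hnB
      rcases hsplitE x1 with h1 | h1 <;> rcases hsplitE x2 with h2 | h2
      · exact h1.symm.trans h2
      · exact h1.symm.trans (hnB.1 h1)
      · exact (hnB.2 h2).symm.trans h2
      · exact h1.symm.trans h2
    have hadjD : ∀ ⦃c d : V⦄, (fromEdgeSet (T \ {s(p, q)})).Adj c d →
        s(c, d) ≠ s(u, v) → D.Adj c d := by
      intro c d hcd hne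
      rw [fromEdgeSet_adj] at hcd
      rw [hDdef, fromEdgeSet_adj]
      exact ⟨⟨⟨hcd.1.1, hne⟩, hcd.1.2⟩, hcd.2⟩
    have hfTe : (fromEdgeSet (T \ {s(p, q)})).Adj u v :=
      (fromEdgeSet_adj _).mpr ⟨⟨hf, by simpa using hfe⟩, huv⟩
    by_cases hx1S : (fromEdgeSet (T \ {s(p, q)})).Reachable u x1
    · -- both endpoints of `s` on the same side as `f`
      have hx2S : (fromEdgeSet (T \ {s(p, q)})).Reachable u x2 := hx1S.trans HS
      have hmemA : ∀ x, (fromEdgeSet (T \ {s(p, q)})).Reachable u x →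
          (x ∈ A ↔ D.Reachable u x) := by
        intro x hx
        constructor
        · intro hxA
          rcases reach_split (u := u) (v := v) hadjD hx with h | h | h
          · exact h
          · exact h
          · exact absurd ((hxA : (fromEdgeSet (T \ {s(u, v)})).Reachable u x).trans
              ((h.mono hDTf).symm)) (tree_not_reach hTree huv hf)
        · intro h
          exact h.mono hDTf
      have hmemA' : ∀ x, (fromEdgeSet (T \ {s(p, q)})).Reachable u x →
          (x ∈ A' ↔ D.Reachable u x) := by
        intro x hx
        constructor
        · intro hxA
          rcases reach_split (u := u) (v := v) hadjD hx with h | h | h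
          · exact h
          · exact h
          · exact absurd ((hxA : (fromEdgeSet (T' \ {s(u, v)})).Reachable u x).trans
              ((h.mono hDT'f).symm)) (tree_not_reach hTree' huv hfT')
        · intro h
          exact h.mono hDT'f
      rw [hcovA, hcovA', cross_iff, cross_iff, hmemA x1 hx1S, hmemA x2 hx2S,
        hmemA' x1 hx1S, hmemA' x2 hx2S]
    · -- both endpoints of `s` on the side opposite to `f`
      have hx2S : ¬ (fromEdgeSet (T \ {s(p, q)})).Reachable u x2 :=
        fun h => hx1S (h.trans HS.symm)
      have hD12 : D.Reachable x1 x2 := by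
        rcases reach_split (u := u) (v := v) hadjD HS with h | h | h
        · exact h
        · exact absurd (h.mono hDTe) hx2S
        · exact absurd (hfTe.reachable.trans (h.mono hDTe)) hx2S
      have h1A : x1 ∈ A ↔ x2 ∈ A :=
        ⟨fun h => h.trans (hD12.mono hDTf), fun h => h.trans (hD12.symm.mono hDTf)⟩
      have h1A' : x1 ∈ A' ↔ x2 ∈ A' :=
        ⟨fun h => h.trans (hD12.mono hDT'f), fun h => h.trans (hD12.symm.mono hDT'f)⟩
      rw [hcovA, hcovA', cross_iff, cross_iff]
      constructor
      · rintro (⟨h1, h2⟩ | ⟨h1, h2⟩)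
        · exact (h2 (h1A.mp h1)).elim
        · exact (h2 (h1A.mpr h1)).elim
      · rintro (⟨h1, h2⟩ | ⟨h1, h2⟩)
        · exact (h2 (h1A'.mp h1)).elim
        · exact (h2 (h1A'.mpr h1)).elim
end
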